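/- arXiv:1012.1946 — 4 statements merged into one kernel-verified Lean document; each statement's English description precedes it below -/
import Mathlib

section
/- Every tight Euclidean 6-design (X, w) in ℝ² supported by two concentric spheres of radii r_1 ≠ r_2 (both positive) coincides, after applying a suitable orthogonal transformation of ℝ², with Bajnok's configuration X = {b_{kj} = (r_k cos((2j+k)π/5), r_k sin((2j+k)π/5)) : 1 ≤ j ≤ 5, k = 1, 2}, and its weight satisfies w(b_{kj}) = c·r_k^{−5} for some constant c > 0. -/
open MeasureTheory Metric Finset
open scoped Classical RealInnerProductSpace

noncomputable section

/-- Euclidean `n`-space `ℝⁿ`. -/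
abbrev Euc (n : ℕ) := EuclideanSpace ℝ (Fin n)

/-- Evaluation of a multivariate polynomial at a point of `ℝⁿ`. -/
def evalPt {n : ℕ} (x : Euc n) (p : MvPolynomial (Fin n) ℝ) : ℝ :=
  MvPolynomial.eval (fun i => x i) p

/-- The normalized average (with respect to the `O(n)`-invariant surface measure,
i.e. the `(n-1)`-dimensional Hausdorff measure) of `f` over the sphere of radius `r`
centered at the origin; for `r = 0` it is `f 0`. -/
def sphAvg (n : ℕ) (r : ℝ) (f : Euc n → ℝ) : ℝ :=
  if r = 0 then f 0
  else ⨍ y in Metric.sphere (0 : Euc n) r, f y ∂(μH[(n : ℝ) - 1])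

/-- `(X, w)` is a Euclidean `t`-design in `ℝⁿ`:
`∑ᵢ (w(Xᵢ)/|Sᵢ|) ∫_{Sᵢ} f dσᵢ = ∑_{x ∈ X} w(x) f(x)` for all polynomials `f` of
degree at most `t`, where the `Sᵢ` are the concentric spheres supporting `X`. -/
def IsEuclideanDesign (n t : ℕ) (X : Finset (Euc n)) (w : Euc n → ℝ) : Prop :=
  ∀ p : MvPolynomial (Fin n) ℝ, p.totalDegree ≤ t →
    ∑ r ∈ X.image (fun x => ‖x‖),
        (∑ x ∈ X.filter (fun x => ‖x‖ = r), w x) * sphAvg n r (fun y => evalPt y p)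
      = ∑ x ∈ X, w x * evalPt x p

/-- Restriction of polynomials to a subset `S ⊆ ℝⁿ`, as a linear map. -/
def polyRestrict (n : ℕ) (S : Set (Euc n)) :
    MvPolynomial (Fin n) ℝ →ₗ[ℝ] (S → ℝ) where
  toFun p := fun x => evalPt (x : Euc n) p
  map_add' p q := by funext x; simp [evalPt]
  map_smul' c p := by funext x; simp [evalPt, MvPolynomial.smul_eval]

/-- `Pol_e(S)`: the space of restrictions to `S` of polynomials of total degree at most `e`. -/
def PolOn (n e : ℕ) (S : Set (Euc n)) : Submodule ℝ (S → ℝ) :=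
  (MvPolynomial.restrictTotalDegree (Fin n) ℝ e).map (polyRestrict n S)

/-- `dim Pol_e(S)`. -/
def dimPolOn (n e : ℕ) (S : Set (Euc n)) : ℕ := Module.finrank ℝ (PolOn n e S)

/-- The union of the concentric spheres (centered at the origin) supporting `X`. -/
def suppSpheres (n : ℕ) (X : Finset (Euc n)) : Set (Euc n) :=
  ⋃ r ∈ X.image (fun x => ‖x‖), Metric.sphere (0 : Euc n) r

/-- `(X, w)` is a tight Euclidean `2e`-design on `S` (the union of the concentric
spheres supporting `X`): it is a Euclidean `2e`-design with `|X| = dim Pol_e(S)`. -/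
def IsTightOnS (n e : ℕ) (X : Finset (Euc n)) (w : Euc n → ℝ) : Prop :=
  IsEuclideanDesign n (2 * e) X w ∧ X.card = dimPolOn n e (suppSpheres n X)

/-- `(X, w)` is a tight Euclidean `2e`-design: tight on `S` and moreover
`dim Pol_e(S) = dim Pol_e(ℝⁿ) = C(n+e, e)`. -/
def IsTightDesign (n e : ℕ) (X : Finset (Euc n)) (w : Euc n → ℝ) : Prop :=
  IsTightOnS n e X w ∧ dimPolOn n e (suppSpheres n X) = (n + e).choose e

/-- The point `b_{kj} = (r cos((2j+k)π/5), r sin((2j+k)π/5))` of Bajnok's configuration. -/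
def bajnokPt (r : ℝ) (k j : ℕ) : Euc 2 :=
  (WithLp.equiv 2 (Fin 2 → ℝ)).symm
    ![r * Real.cos ((2 * j + k) * Real.pi / 5), r * Real.sin ((2 * j + k) * Real.pi / 5)]

namespace TightSix
open Complex MvPolynomial

def cE : ℂ ≃ₗᵢ[ℝ] Euc 2 := Complex.orthonormalBasisOneI.repr

def zC (x : Euc 2) : ℂ := cE.symm x

lemma zC_cE (z : ℂ) : zC (cE z) = z := cE.symm_apply_apply z
lemma cE_zC (x : Euc 2) : cE (zC x) = x := cE.apply_symm_apply x
lemma zC_inj : Function.Injective zC := fun a b h => by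
  rw [← cE_zC a, ← cE_zC b, h]
lemma abs_zC (x : Euc 2) : ‖zC x‖ = ‖x‖ := by
  exact cE.symm.norm_map x
lemma zC_apply (x : Euc 2) : zC x = x 0 + x 1 * I := by
  simp [zC, cE]

abbrev μ2 : Measure (Euc 2) := μH[1]

lemma sphere_eq_image (r : ℝ) : sphere (0 : Euc 2) r = cE '' (sphere (0 : ℂ) r) := by
  rw [show ⇑cE = ⇑cE.toIsometryEquiv from rfl, cE.toIsometryEquiv.image_sphere]
  rw [show cE.toIsometryEquiv (0 : ℂ) = (0 : Euc 2) from map_zero cE]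

lemma sphere_finite {r : ℝ} (hr : 0 < r) : μ2 (sphere (0 : Euc 2) r) < ⊤ := by
  rw [sphere_eq_image r, show ⇑cE = ⇑cE.toIsometryEquiv from rfl,
    cE.toIsometryEquiv.hausdorffMeasure_image]
  have hsub : sphere (0 : ℂ) r ⊆ circleMap 0 r '' (Set.Icc (-Real.pi) Real.pi) := by
    intro z hz
    have habs : ‖z‖ = r := by
      simpa using (mem_sphere_zero_iff_norm.mp hz)
    refine ⟨Complex.arg z, ⟨(Complex.neg_pi_lt_arg z).le, Complex.arg_le_pi z⟩, ?_⟩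
    rw [circleMap]
    simpa [habs] using Complex.norm_mul_exp_arg_mul_I z
  calc μH[1] (sphere (0:ℂ) r) ≤ μH[1] (circleMap 0 r '' (Set.Icc (-Real.pi) Real.pi)) :=
        measure_mono hsub
    _ ≤ ((Real.nnabs r : NNReal) : ENNReal) ^ (1:ℝ) * μH[1] (Set.Icc (-Real.pi) Real.pi) :=
        (lipschitzWith_circleMap 0 r).hausdorffMeasure_image_le (by norm_num) _
    _ < ⊤ := by
        rw [MeasureTheory.hausdorffMeasure_real]
        refine ENNReal.mul_lt_top ?_ ?_
        · simpa [ENNReal.rpow_one] using ENNReal.coe_lt_top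
        · simpa [Real.volume_Icc] using ENNReal.ofReal_lt_top

def rotE (u : Circle) : Euc 2 ≃ₗᵢ[ℝ] Euc 2 := (cE.symm.trans (rotation u)).trans cE

lemma zC_rotE (u : Circle) (x : Euc 2) : zC (rotE u x) = (u : ℂ) * zC x := by
  simp [rotE, zC_cE, zC, rotation_apply]

lemma rotE_preimage_sphere (u : Circle) (r : ℝ) :
    (rotE u) ⁻¹' (sphere (0 : Euc 2) r) = sphere (0 : Euc 2) r := by
  ext y
  simp [mem_sphere_zero_iff_norm, (rotE u).norm_map]

lemma rotE_measurePreserving (u : Circle) (r : ℝ) :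
    MeasurePreserving (rotE u) (μ2.restrict (sphere (0 : Euc 2) r))
      (μ2.restrict (sphere (0 : Euc 2) r)) := by
  have h := (rotE u).toIsometryEquiv.measurePreserving_hausdorffMeasure (X := Euc 2) (Y := Euc 2) 1
  have h2 := h.restrict_preimage (s := sphere (0 : Euc 2) r) isClosed_sphere.measurableSet
  rwa [show ⇑(rotE u).toIsometryEquiv = ⇑(rotE u) from rfl, rotE_preimage_sphere] at h2

lemma rotE_measurableEmbedding (u : Circle) : MeasurableEmbedding (rotE u) :=
  (rotE u).toHomeomorph.measurableEmbedding

lemma integral_pow_sphere_zero (r : ℝ) {m : ℕ} (hm : 1 ≤ m) :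
    ∫ y in sphere (0 : Euc 2) r, (zC y) ^ m ∂μ2 = 0 := by
  have hm0 : (m : ℝ) ≠ 0 := Nat.cast_ne_zero.mpr (by omega)
  set θ : ℝ := Real.pi / m with hθ
  set u : Circle := Circle.exp θ with hu
  have hum : (u : ℂ) ^ m = -1 := by
    rw [hu, Circle.coe_exp, ← Complex.exp_nat_mul]
    have : (m : ℂ) * ((θ : ℂ) * I) = (Real.pi : ℂ) * I := by
      have : (m : ℝ) * θ = Real.pi := by rw [hθ]; field_simp
      push_cast [← this]
      ring
    rw [this, Complex.exp_pi_mul_I]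
  set J := ∫ y in sphere (0 : Euc 2) r, (zC y) ^ m ∂μ2 with hJ
  have h1 : ∫ y in sphere (0 : Euc 2) r, (zC (rotE u y)) ^ m ∂μ2 = J :=
    (rotE_measurePreserving u r).integral_comp (rotE_measurableEmbedding u)
      (fun y => (zC y) ^ m)
  have h2 : ∫ y in sphere (0 : Euc 2) r, (zC (rotE u y)) ^ m ∂μ2 = ((u : ℂ) ^ m) • J := by
    simp_rw [zC_rotE, mul_pow]
    rw [← integral_smul]
    simp [smul_eq_mul]
  rw [h2, hum] at h1
  have h3 : J + J = 0 := by
    simp only [neg_smul, one_smul] at h1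
    linear_combination -h1
  exact add_self_eq_zero.mp h3

lemma zC_continuous : Continuous zC := cE.symm.continuous

lemma integrableOn_sphere {r : ℝ} (hr : 0 < r) {f : Euc 2 → ℂ} (hf : Continuous f) :
    IntegrableOn f (sphere (0 : Euc 2) r) μ2 := by
  haveI : IsFiniteMeasure (μ2.restrict (sphere (0 : Euc 2) r)) :=
    ⟨by rw [Measure.restrict_apply_univ]; exact sphere_finite hr⟩
  obtain ⟨C, hC⟩ := (isCompact_sphere (0 : Euc 2) r).exists_bound_of_continuousOn
    hf.continuousOn
  refine Integrable.mono' (integrable_const C) hf.aestronglyMeasurable ?_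
  exact (ae_restrict_iff' isClosed_sphere.measurableSet).2 (ae_of_all _ hC)

def monC (m b : ℕ) (y : Euc 2) : ℂ := (zC y) ^ m * ((‖y‖ : ℂ)) ^ (2 * b)

lemma monC_continuous (m b : ℕ) : Continuous (monC m b) := by
  unfold monC
  exact (zC_continuous.pow m).mul ((Complex.continuous_ofReal.comp continuous_norm).pow (2*b))

lemma integral_monC_zero {r : ℝ} (hr : 0 < r) {m b : ℕ} (hm : 1 ≤ m) :
    ∫ y in sphere (0 : Euc 2) r, monC m b y ∂μ2 = 0 := by
  have heq : Set.EqOn (monC m b) (fun y => ((r : ℂ) ^ (2 * b)) • (zC y) ^ m)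
      (sphere (0 : Euc 2) r) := by
    intro y hy
    have : ‖y‖ = r := mem_sphere_zero_iff_norm.mp hy
    simp [monC, this, smul_eq_mul]
    ring
  rw [setIntegral_congr_fun isClosed_sphere.measurableSet heq, integral_smul,
    integral_pow_sphere_zero r hm, smul_zero]

lemma sphAvg_re_zero {r : ℝ} (hr : 0 < r) {m b : ℕ} (hm : 1 ≤ m) :
    sphAvg 2 r (fun y => (monC m b y).re) = 0 := by
  rw [sphAvg, if_neg hr.ne', show ((2:ℕ) : ℝ) - 1 = 1 by norm_num, setAverage_eq]
  have : ∫ y in sphere (0 : Euc 2) r, (monC m b y).re ∂μ2 = 0 := by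
    have h := integral_re (μ := μ2.restrict (sphere (0 : Euc 2) r))
      (integrableOn_sphere hr (monC_continuous m b))
    rw [integral_monC_zero hr hm] at h
    simpa using h
  rw [this, smul_zero]

lemma sphAvg_im_zero {r : ℝ} (hr : 0 < r) {m b : ℕ} (hm : 1 ≤ m) :
    sphAvg 2 r (fun y => (monC m b y).im) = 0 := by
  rw [sphAvg, if_neg hr.ne', show ((2:ℕ) : ℝ) - 1 = 1 by norm_num, setAverage_eq]
  have : ∫ y in sphere (0 : Euc 2) r, (monC m b y).im ∂μ2 = 0 := by
    have h := integral_im (μ := μ2.restrict (sphere (0 : Euc 2) r))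
      (integrableOn_sphere hr (monC_continuous m b))
    rw [integral_monC_zero hr hm] at h
    simpa using h
  rw [this, smul_zero]

def reP (q : MvPolynomial (Fin 2) ℂ) : MvPolynomial (Fin 2) ℝ :=
  ∑ s ∈ q.support, monomial s (q.coeff s).re

def imP (q : MvPolynomial (Fin 2) ℂ) : MvPolynomial (Fin 2) ℝ :=
  ∑ s ∈ q.support, monomial s (q.coeff s).im

lemma evalPt_reP (q : MvPolynomial (Fin 2) ℂ) (x : Euc 2) :
    evalPt x (reP q) = (eval (fun i => (x i : ℂ)) q).re := by
  rw [eval_eq, Complex.re_sum, evalPt, reP, map_sum]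
  refine Finset.sum_congr rfl fun s _hs => ?_
  rw [eval_monomial]
  rw [Finsupp.prod]
  simp [← Complex.ofReal_pow, ← Complex.ofReal_prod, Complex.mul_re]

lemma evalPt_imP (q : MvPolynomial (Fin 2) ℂ) (x : Euc 2) :
    evalPt x (imP q) = (eval (fun i => (x i : ℂ)) q).im := by
  rw [eval_eq, Complex.im_sum, evalPt, imP, map_sum]
  refine Finset.sum_congr rfl fun s _hs => ?_
  rw [eval_monomial]
  rw [Finsupp.prod]
  simp [← Complex.ofReal_pow, ← Complex.ofReal_prod, Complex.mul_im]

lemma totalDegree_reP (q : MvPolynomial (Fin 2) ℂ) :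
    (reP q).totalDegree ≤ q.totalDegree ∧ (imP q).totalDegree ≤ q.totalDegree := by
  constructor <;>
  · refine (totalDegree_finset_sum _ _).trans (Finset.sup_le fun s hs => ?_)
    exact (totalDegree_monomial_le _ _).trans (le_totalDegree hs)

def qPoly (m b : ℕ) : MvPolynomial (Fin 2) ℂ :=
  (X 0 + C I * X 1) ^ m * (X 0 ^ 2 + X 1 ^ 2) ^ b

lemma qPoly_totalDegree (m b : ℕ) : (qPoly m b).totalDegree ≤ m + 2 * b := by
  refine (totalDegree_mul _ _).trans (add_le_add ?_ ?_)
  · refine (totalDegree_pow _ _).trans ?_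
    have h1 : (X (0 : Fin 2) + C I * X 1).totalDegree ≤ 1 := by
      refine (totalDegree_add _ _).trans (max_le ?_ ?_)
      · exact le_of_eq (totalDegree_X _)
      · refine (totalDegree_mul _ _).trans ?_
        simp [totalDegree_X]
    calc m * (X (0 : Fin 2) + C I * X 1).totalDegree ≤ m * 1 := Nat.mul_le_mul_left m h1
      _ = m := mul_one m
  · refine (totalDegree_pow _ _).trans ?_
    have h1 : ((X (0 : Fin 2)) ^ 2 + X 1 ^ 2 : MvPolynomial (Fin 2) ℂ).totalDegree ≤ 2 := by
      refine (totalDegree_add _ _).trans (max_le ?_ ?_) <;>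
      · refine (totalDegree_pow _ _).trans ?_
        simp [totalDegree_X]
    calc b * ((X (0 : Fin 2)) ^ 2 + X 1 ^ 2 : MvPolynomial (Fin 2) ℂ).totalDegree ≤ b * 2 :=
        Nat.mul_le_mul_left b h1
      _ = 2 * b := Nat.mul_comm b 2

lemma norm_sq_euc (x : Euc 2) : (‖x‖ : ℝ) ^ 2 = x 0 ^ 2 + x 1 ^ 2 := by
  rw [EuclideanSpace.norm_eq, Real.sq_sqrt (by positivity)]
  simp [Fin.sum_univ_two, sq_abs]

lemma eval_qPoly (m b : ℕ) (x : Euc 2) :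
    eval (fun i => (x i : ℂ)) (qPoly m b) = monC m b x := by
  rw [qPoly, monC]
  simp only [map_mul, map_pow, map_add, eval_X, eval_C]
  rw [zC_apply]
  congr 1
  · ring_nf
  · have h2 : ((‖x‖ : ℂ)) ^ 2 = (x 0 : ℂ) ^ 2 + (x 1 : ℂ) ^ 2 := by
      rw [← Complex.ofReal_pow, norm_sq_euc]
      push_cast
      ring
    rw [← h2, ← pow_mul, mul_comm 2 b, pow_mul, ← pow_mul, mul_comm b 2]

lemma momC (r : ℕ → ℝ) (hr1 : 0 < r 1) (hr2 : 0 < r 2)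
    (X : Finset (Euc 2)) (w : Euc 2 → ℝ)
    (hsupp : X.image (fun x => ‖x‖) = {r 1, r 2})
    (hdes : IsEuclideanDesign 2 6 X w) {m b : ℕ} (hm : 1 ≤ m) (hmb : m + 2 * b ≤ 6) :
    ∑ x ∈ X, (w x : ℂ) * monC m b x = 0 := by
  have hdeg : (qPoly m b).totalDegree ≤ 6 := (qPoly_totalDegree m b).trans hmb
  have hpos : ∀ r' ∈ X.image (fun x => ‖x‖), 0 < r' := by
    intro r' hr'
    rw [hsupp] at hr'
    rcases Finset.mem_insert.mp hr' with h | h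
    · rw [h]; exact hr1
    · rw [Finset.mem_singleton.mp h]; exact hr2
  have hfre : (fun y : Euc 2 => evalPt y (reP (qPoly m b))) = fun y => (monC m b y).re :=
    funext fun y => by rw [evalPt_reP, eval_qPoly]
  have hfim : (fun y : Euc 2 => evalPt y (imP (qPoly m b))) = fun y => (monC m b y).im :=
    funext fun y => by rw [evalPt_imP, eval_qPoly]
  have hre := hdes (reP (qPoly m b)) ((totalDegree_reP _).1.trans hdeg)
  have him := hdes (imP (qPoly m b)) ((totalDegree_reP _).2.trans hdeg)
  rw [Finset.sum_eq_zero (fun r' hr' => by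
    rw [hfre, sphAvg_re_zero (hpos r' hr') hm, mul_zero])] at hre
  rw [Finset.sum_eq_zero (fun r' hr' => by
    rw [hfim, sphAvg_im_zero (hpos r' hr') hm, mul_zero])] at him
  have hres : ∑ x ∈ X, w x * (monC m b x).re = 0 := by
    rw [hre]
    refine Finset.sum_congr rfl fun x _ => ?_
    rw [congrFun hfre x]
  have hims : ∑ x ∈ X, w x * (monC m b x).im = 0 := by
    rw [him]
    refine Finset.sum_congr rfl fun x _ => ?_
    rw [congrFun hfim x]
  apply Complex.ext
  · rw [Complex.re_sum, Complex.zero_re, ← hres]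
    refine Finset.sum_congr rfl fun x _ => ?_
    simp [Complex.mul_re]
  · rw [Complex.im_sum, Complex.zero_im, ← hims]
    refine Finset.sum_congr rfl fun x _ => ?_
    simp [Complex.mul_im]

end TightSix

namespace TightSix
open Complex

variable {α : Type*} {Y : Finset α} {ζ : α → ℂ} {w : α → ℝ}

/-- weighted pair-moments on the circle -/
lemma mom_pair (habs : ∀ x ∈ Y, ‖ζ x‖ = 1)
    (hmom : ∀ m : ℕ, 1 ≤ m → m ≤ 4 → ∑ x ∈ Y, (w x : ℂ) * ζ x ^ m = 0)
    {a b : ℕ} (hab : a ≤ b + 4) (hba : b ≤ a + 4) :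
    ∑ x ∈ Y, (w x : ℂ) * (ζ x ^ a * (starRingEnd ℂ) (ζ x) ^ b)
      = if a = b then ((∑ x ∈ Y, w x : ℝ) : ℂ) else 0 := by
  have key : ∀ a b : ℕ, b ≤ a → a ≤ b + 4 →
      ∑ x ∈ Y, (w x : ℂ) * (ζ x ^ a * (starRingEnd ℂ) (ζ x) ^ b)
        = if a = b then ((∑ x ∈ Y, w x : ℝ) : ℂ) else 0 := by
    intro a b hba' hab'
    have hsimp : ∀ x ∈ Y, ζ x ^ a * (starRingEnd ℂ) (ζ x) ^ b = ζ x ^ (a - b) := by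
      intro x hx
      have h1 : ζ x * (starRingEnd ℂ) (ζ x) = 1 := by
        rw [Complex.mul_conj]
        norm_cast
        rw [Complex.normSq_eq_norm_sq, habs x hx]
        norm_num
      have ha : a - b + b = a := by omega
      conv_lhs => rw [← ha]
      rw [pow_add, mul_assoc, ← mul_pow, h1, one_pow, mul_one]
    rw [Finset.sum_congr rfl (fun x hx => by rw [hsimp x hx])]
    by_cases h : a = b
    · simp only [h, Nat.sub_self, pow_zero, mul_one, if_pos rfl]
      push_cast
      rfl
    · rw [if_neg h]
      exact hmom (a - b) (by omega) (by omega)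
  rcases le_total b a with h | h
  · exact key a b h hab
  · have h2 := key b a h hba
    have := congrArg (starRingEnd ℂ) h2
    rw [map_sum] at this
    simp only [map_mul, map_pow, Complex.conj_conj, Complex.conj_ofReal] at this
    rcases eq_or_ne a b with rfl | hne
    · simpa using h2
    · rw [if_neg hne]
      rw [if_neg (Ne.symm hne), map_zero] at this
      rw [← this]
      exact Finset.sum_congr rfl fun x _ => by ring

/-- quadratic form expansion -/
lemma expand_sq (habs : ∀ x ∈ Y, ‖ζ x‖ = 1)
    (hmom : ∀ m : ℕ, 1 ≤ m → m ≤ 4 → ∑ x ∈ Y, (w x : ℂ) * ζ x ^ m = 0)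
    (c : Fin 5 → ℂ) :
    ∑ x ∈ Y, (w x : ℂ) * ((∑ a : Fin 5, c a * ζ x ^ (a : ℕ)) *
        (starRingEnd ℂ) (∑ a : Fin 5, c a * ζ x ^ (a : ℕ)))
      = ((∑ x ∈ Y, w x : ℝ) : ℂ) * ∑ a : Fin 5, c a * (starRingEnd ℂ) (c a) := by
  have step : ∀ x ∈ Y, (w x : ℂ) * ((∑ a : Fin 5, c a * ζ x ^ (a : ℕ)) *
        (starRingEnd ℂ) (∑ a : Fin 5, c a * ζ x ^ (a : ℕ)))
      = ∑ a : Fin 5, ∑ b : Fin 5, (c a * (starRingEnd ℂ) (c b)) *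
          ((w x : ℂ) * (ζ x ^ (a : ℕ) * (starRingEnd ℂ) (ζ x) ^ (b : ℕ))) := by
    intro x _
    rw [map_sum, Finset.sum_mul_sum]
    rw [Finset.mul_sum]
    refine Finset.sum_congr rfl fun a _ => ?_
    rw [Finset.mul_sum]
    refine Finset.sum_congr rfl fun b _ => ?_
    simp only [map_mul, map_pow]
    ring
  rw [Finset.sum_congr rfl step, Finset.sum_comm]
  have swap2 : ∀ a : Fin 5, ∑ x ∈ Y, ∑ b : Fin 5, (c a * (starRingEnd ℂ) (c b)) *
      ((w x : ℂ) * (ζ x ^ (a : ℕ) * (starRingEnd ℂ) (ζ x) ^ (b : ℕ)))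
      = ∑ b : Fin 5, (c a * (starRingEnd ℂ) (c b)) *
          (∑ x ∈ Y, (w x : ℂ) * (ζ x ^ (a : ℕ) * (starRingEnd ℂ) (ζ x) ^ (b : ℕ))) := by
    intro a
    rw [Finset.sum_comm]
    exact Finset.sum_congr rfl fun b _ => by rw [Finset.mul_sum]
  rw [Finset.sum_congr rfl fun a _ => swap2 a]
  rw [Finset.mul_sum]
  refine Finset.sum_congr rfl fun a _ => ?_
  rw [Finset.sum_congr rfl fun b _ => by
    rw [mom_pair habs hmom (by omega) (by omega)]]
  rw [Finset.sum_eq_single a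
    (fun b _ hb => by rw [if_neg (fun h => hb (Fin.val_injective h).symm), mul_zero])
    (by simp)]
  rw [if_pos rfl]
  ring

lemma card_ge_five (habs : ∀ x ∈ Y, ‖ζ x‖ = 1)
    (hmom : ∀ m : ℕ, 1 ≤ m → m ≤ 4 → ∑ x ∈ Y, (w x : ℂ) * ζ x ^ m = 0)
    (hw : ∀ x ∈ Y, 0 < w x) (hne : Y.Nonempty) : 5 ≤ Y.card := by
  by_contra hlt
  push_neg at hlt
  set P : Polynomial ℂ := ∏ x ∈ Y, (Polynomial.X - Polynomial.C (ζ x)) with hP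
  have hmonic : P.Monic :=
    Polynomial.monic_prod_of_monic _ _ (fun x _ => Polynomial.monic_X_sub_C _)
  have hdeg : P.natDegree = Y.card := by
    rw [hP, Polynomial.natDegree_prod _ _ (fun x _ => Polynomial.X_sub_C_ne_zero _)]
    simp [Polynomial.natDegree_X_sub_C]
  set c : Fin 5 → ℂ := fun a => P.coeff a with hc
  have hQ : ∀ x ∈ Y, (∑ a : Fin 5, c a * ζ x ^ (a : ℕ)) = P.eval (ζ x) := by
    intro x hx
    rw [Polynomial.eval_eq_sum_range' (n := 5) (by omega)]
    rw [Fin.sum_univ_eq_sum_range (fun a => P.coeff a * ζ x ^ a)]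
  have hzero : ∀ x ∈ Y, P.eval (ζ x) = 0 := fun x hx => by
    rw [hP, Polynomial.eval_prod]
    exact Finset.prod_eq_zero hx (by simp)
  have hexp := expand_sq habs hmom c
  rw [Finset.sum_congr rfl (fun x hx => by
    rw [hQ x hx, hzero x hx, map_zero, mul_zero, mul_zero])] at hexp
  rw [Finset.sum_const, smul_zero] at hexp
  have hW : (0:ℝ) < ∑ x ∈ Y, w x := Finset.sum_pos (fun x hx => hw x hx) hne
  have hS : ∑ a : Fin 5, Complex.normSq (c a) = 0 := by
    have h1 : ((∑ a : Fin 5, Complex.normSq (c a) : ℝ) : ℂ)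
        = ∑ a : Fin 5, c a * (starRingEnd ℂ) (c a) := by
      push_cast
      exact Finset.sum_congr rfl fun a _ => (Complex.mul_conj (c a)).symm
    have h2 : ((∑ x ∈ Y, w x : ℝ) : ℂ) ≠ 0 := Complex.ofReal_ne_zero.mpr hW.ne'
    have := hexp.symm
    rw [← h1] at this
    rcases mul_eq_zero.mp this with h | h
    · exact absurd h h2
    · exact_mod_cast h
  have hterm : Complex.normSq (c ⟨Y.card, by omega⟩) = 1 := by
    have : c ⟨Y.card, by omega⟩ = 1 := by
      rw [hc]
      simp only [← hdeg]
      exact hmonic.coeff_natDegree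
    rw [this, Complex.normSq_one]
  have hnonneg : ∀ a : Fin 5, (0:ℝ) ≤ Complex.normSq (c a) := fun a => Complex.normSq_nonneg _
  have := (Finset.sum_eq_zero_iff_of_nonneg (fun a _ => hnonneg a)).mp hS
    ⟨Y.card, by omega⟩ (Finset.mem_univ _)
  rw [hterm] at this
  norm_num at this

lemma structure_five (habs : ∀ x ∈ Y, ‖ζ x‖ = 1)
    (hmom : ∀ m : ℕ, 1 ≤ m → m ≤ 4 → ∑ x ∈ Y, (w x : ℂ) * ζ x ^ m = 0)
    (hw : ∀ x ∈ Y, 0 < w x) (hcard : Y.card = 5) :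
    (∀ x ∈ Y, w x = (∑ y ∈ Y, w y) / 5) ∧ (∀ x ∈ Y, ∀ y ∈ Y, ζ x ^ 5 = ζ y ^ 5) := by
  set W : ℝ := ∑ y ∈ Y, w y with hWdef
  have hne : Y.Nonempty := Finset.card_pos.mp (by omega)
  have hW : (0:ℝ) < W := Finset.sum_pos (fun x hx => hw x hx) hne
  set e : {x // x ∈ Y} ≃ Fin 5 := Finset.equivFinOfCardEq hcard with he
  set ξ : Fin 5 → α := fun j => (e.symm j : α) with hξ
  have hξmem : ∀ j, ξ j ∈ Y := fun j => (e.symm j).2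
  have htrans : ∀ f : α → ℂ, ∑ x ∈ Y, f x = ∑ j : Fin 5, f (ξ j) := by
    intro f
    rw [← Finset.sum_coe_sort Y f]
    exact (Equiv.sum_comp e.symm (fun x : {x // x ∈ Y} => f x)).symm
  have hconj1 : ∀ x ∈ Y, ζ x * (starRingEnd ℂ) (ζ x) = 1 := by
    intro x hx
    rw [Complex.mul_conj]
    norm_cast
    rw [Complex.normSq_eq_norm_sq, habs x hx]
    norm_num
  set M : Matrix (Fin 5) (Fin 5) ℂ :=
    fun m j => ((Real.sqrt (w (ξ j) / W) : ℝ) : ℂ) * ζ (ξ j) ^ (m : ℕ) with hM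
  have hsq : ∀ j, ((Real.sqrt (w (ξ j) / W) : ℝ) : ℂ) * ((Real.sqrt (w (ξ j) / W) : ℝ) : ℂ)
      = ((w (ξ j) / W : ℝ) : ℂ) := by
    intro j
    rw [← Complex.ofReal_mul, Real.mul_self_sqrt (div_nonneg (hw _ (hξmem j)).le hW.le)]
  have hMMH : M * M.conjTranspose = 1 := by
    ext m m'
    rw [Matrix.mul_apply, Matrix.one_apply]
    have hterm : ∀ j, M m j * M.conjTranspose j m'
        = ((W : ℝ) : ℂ)⁻¹ * (((w (ξ j) : ℝ) : ℂ) *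
            (ζ (ξ j) ^ (m : ℕ) * (starRingEnd ℂ) (ζ (ξ j)) ^ (m' : ℕ))) := by
      intro j
      rw [Matrix.conjTranspose_apply]
      simp only [hM]
      simp only [← starRingEnd_apply, map_mul, map_pow, Complex.conj_ofReal]
      have h2 := hsq j
      rw [Complex.ofReal_div] at h2
      linear_combination (ζ (ξ j) ^ (m:ℕ) * (starRingEnd ℂ) (ζ (ξ j)) ^ (m':ℕ)) * h2
    rw [Finset.sum_congr rfl fun j _ => hterm j]
    rw [← Finset.mul_sum]
    have : ∑ j : Fin 5, ((w (ξ j) : ℝ) : ℂ) *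
        (ζ (ξ j) ^ (m : ℕ) * (starRingEnd ℂ) (ζ (ξ j)) ^ (m' : ℕ))
        = ∑ x ∈ Y, ((w x : ℝ) : ℂ) * (ζ x ^ (m : ℕ) * (starRingEnd ℂ) (ζ x) ^ (m' : ℕ)) :=
      (htrans (fun x => ((w x : ℝ) : ℂ) *
        (ζ x ^ (m : ℕ) * (starRingEnd ℂ) (ζ x) ^ (m' : ℕ)))).symm
    rw [this, mom_pair habs hmom (by omega) (by omega)]
    rcases eq_or_ne m m' with rfl | hne'
    · rw [if_pos rfl, if_pos rfl, ← hWdef]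
      exact inv_mul_cancel₀ (by simpa using hW.ne')
    · rw [if_neg (fun h => hne' (Fin.val_injective h)), if_neg hne', mul_zero]
  have hMHM : M.conjTranspose * M = 1 := mul_eq_one_comm.mp hMMH
  have hentry : ∀ j l : Fin 5, (((Real.sqrt (w (ξ j) / W) : ℝ) : ℂ) *
      ((Real.sqrt (w (ξ l) / W) : ℝ) : ℂ)) *
      (∑ m : Fin 5, ((starRingEnd ℂ) (ζ (ξ j)) * ζ (ξ l)) ^ (m : ℕ))
      = if j = l then 1 else 0 := by
    intro j l
    have h := congrFun (congrFun hMHM j) l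
    rw [Matrix.mul_apply, Matrix.one_apply] at h
    rw [← h]
    rw [Finset.mul_sum]
    refine Finset.sum_congr rfl fun m _ => ?_
    rw [Matrix.conjTranspose_apply]
    simp only [hM]
    simp only [← starRingEnd_apply, map_mul, map_pow, Complex.conj_ofReal]
    rw [mul_pow]
    ring
  constructor
  · intro x hx
    set j := e ⟨x, hx⟩ with hj
    have hxj : ξ j = x := congrArg Subtype.val (e.symm_apply_apply ⟨x, hx⟩)
    have h := hentry j j
    rw [if_pos rfl, hxj] at h
    rw [Finset.sum_congr rfl (fun m _ => by
      rw [mul_comm ((starRingEnd ℂ) (ζ x)) (ζ x), hconj1 x hx, one_pow])] at h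
    rw [Finset.sum_const] at h
    rw [← Complex.ofReal_mul, Real.mul_self_sqrt (div_nonneg (hw x hx).le hW.le)] at h
    simp only [Finset.card_univ, Fintype.card_fin, nsmul_eq_mul, Nat.cast_ofNat] at h
    have : (w x / W) * 5 = 1 := by exact_mod_cast h
    field_simp at this ⊢
    linarith
  · intro x hx y hy
    rcases eq_or_ne x y with rfl | hxy
    · rfl
    set j := e ⟨x, hx⟩ with hj
    set l := e ⟨y, hy⟩ with hl
    have hxj : ξ j = x := congrArg Subtype.val (e.symm_apply_apply ⟨x, hx⟩)
    have hyl : ξ l = y := congrArg Subtype.val (e.symm_apply_apply ⟨y, hy⟩)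
    have hjl : j ≠ l := by
      intro h
      apply hxy
      have := congrArg ξ h
      rwa [hxj, hyl] at this
    have h := hentry j l
    rw [if_neg hjl, hxj, hyl] at h
    set u : ℂ := (starRingEnd ℂ) (ζ x) * ζ y with hu
    have hK : (((Real.sqrt (w x / W) : ℝ) : ℂ) * ((Real.sqrt (w y / W) : ℝ) : ℂ)) ≠ 0 := by
      apply mul_ne_zero <;>
      · rw [Complex.ofReal_ne_zero]
        refine (Real.sqrt_pos.mpr (div_pos (hw _ (by assumption)) hW)).ne'
    have hsum : ∑ m : Fin 5, u ^ (m : ℕ) = 0 := by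
      rcases mul_eq_zero.mp h with h' | h'
      · exact absurd h' hK
      · exact h'
    have hu5 : u ^ 5 = 1 := by
      have hgeom : (∑ i ∈ Finset.range 5, u ^ i) * (u - 1) = u ^ 5 - 1 := geom_sum_mul u 5
      rw [← Fin.sum_univ_eq_sum_range (fun i => u ^ i) 5, hsum, zero_mul] at hgeom
      linear_combination -hgeom
    have hco : (starRingEnd ℂ) (ζ x) ^ 5 * ζ y ^ 5 = 1 := by
      rw [← mul_pow, ← hu]
      exact hu5
    have : ζ x ^ 5 * ((starRingEnd ℂ) (ζ x) ^ 5 * ζ y ^ 5) = ζ x ^ 5 := by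
      rw [hco, mul_one]
    rw [← mul_assoc, ← mul_pow, hconj1 x hx, one_pow, one_mul] at this
    exact this.symm

lemma root_surj (hinj : Set.InjOn ζ Y) (hcard : Y.card = 5) {v : ℂ}
    (hv : ∀ x ∈ Y, ζ x ^ 5 = v) {u : ℂ} (hu : u ^ 5 = v) : ∃ x ∈ Y, ζ x = u := by
  have himg : Y.image ζ ⊆ (Polynomial.nthRoots 5 v).toFinset := fun t ht => by
    obtain ⟨x, hx, rfl⟩ := Finset.mem_image.mp ht
    rw [Multiset.mem_toFinset, Polynomial.mem_nthRoots (by norm_num)]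
    exact hv x hx
  have hcard2 : (Polynomial.nthRoots 5 v).toFinset.card ≤ 5 :=
    (Multiset.toFinset_card_le _).trans (Polynomial.card_nthRoots 5 v)
  have himgcard : (Y.image ζ).card = 5 := by
    rw [Finset.card_image_of_injOn hinj, hcard]
  have heq : Y.image ζ = (Polynomial.nthRoots 5 v).toFinset :=
    Finset.eq_of_subset_of_card_le himg (by omega)
  have : u ∈ Y.image ζ := by
    rw [heq, Multiset.mem_toFinset, Polynomial.mem_nthRoots (by norm_num)]
    exact hu
  obtain ⟨x, hx, hxu⟩ := Finset.mem_image.mp this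
  exact ⟨x, hx, hxu⟩

end TightSix

namespace TightSix
open Complex

def bexp (k j : ℕ) : ℂ :=
  Complex.exp ((((2 * j + k) * Real.pi / 5 : ℝ) : ℂ) * Complex.I)

lemma abs_bexp (k j : ℕ) : ‖bexp k j‖ = 1 := Complex.norm_exp_ofReal_mul_I _

lemma zC_bajnok (ρ : ℝ) (k j : ℕ) : zC (bajnokPt ρ k j) = (ρ : ℂ) * bexp k j := by
  rw [zC_apply]
  have h0 : (bajnokPt ρ k j) 0 = ρ * Real.cos ((2 * j + k) * Real.pi / 5) := rfl
  have h1 : (bajnokPt ρ k j) 1 = ρ * Real.sin ((2 * j + k) * Real.pi / 5) := rfl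
  rw [h0, h1, bexp, Complex.exp_mul_I]
  push_cast
  ring

lemma bexp_pow5 (k j : ℕ) : bexp k j ^ 5 = (-1 : ℂ) ^ k := by
  rw [bexp, ← Complex.exp_nat_mul]
  have harg : ((5 : ℕ) : ℂ) * ((((2 * j + k) * Real.pi / 5 : ℝ) : ℂ) * I)
      = ((2 * j + k : ℕ) : ℂ) * ((Real.pi : ℂ) * I) := by
    push_cast
    ring
  rw [harg, Complex.exp_nat_mul, Complex.exp_pi_mul_I, pow_add, pow_mul, neg_one_sq,
    one_pow, one_mul]

lemma bexp_inj (k : ℕ) : ∀ j ∈ Finset.Icc 1 5, ∀ j' ∈ Finset.Icc 1 5,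
    bexp k j = bexp k j' → j = j' := by
  intro j hj j' hj' h
  rw [Finset.mem_Icc] at hj hj'
  rw [bexp, bexp, Complex.exp_eq_exp_iff_exists_int] at h
  obtain ⟨n, hn⟩ := h
  have him := congrArg Complex.im hn
  simp only [Complex.add_im, Complex.mul_im, Complex.ofReal_re, Complex.I_im,
    Complex.ofReal_im, Complex.I_re, Complex.mul_re, Complex.intCast_im, Complex.intCast_re,
    Complex.re_ofNat, Complex.im_ofNat] at him
  -- him : (2*j+k)*π/5 = (2*j'+k)*π/5 + n * (2*π)  (up to simp normal form)
  have hπ : Real.pi ≠ 0 := Real.pi_ne_zero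
  have hkey : (2 * (j : ℝ) + k) / 5 * Real.pi = ((2 * (j' : ℝ) + k) / 5 + 2 * n) * Real.pi := by
    push_cast at him ⊢
    linear_combination him
  have hq := mul_right_cancel₀ hπ hkey
  have hj5 : (j : ℝ) = (j' : ℝ) + 5 * n := by linarith
  have h1j : (1 : ℝ) ≤ (j : ℝ) := by exact_mod_cast hj.1
  have h5j : (j : ℝ) ≤ 5 := by exact_mod_cast hj.2
  have h1j' : (1 : ℝ) ≤ (j' : ℝ) := by exact_mod_cast hj'.1
  have h5j' : (j' : ℝ) ≤ 5 := by exact_mod_cast hj'.2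
  have hnr : -1 < (n : ℝ) ∧ (n : ℝ) < 1 := by constructor <;> nlinarith
  have hn0 : n = 0 := by
    have : -1 < n ∧ n < 1 := by exact_mod_cast hnr
    omega
  rw [hn0] at hj5
  have : (j : ℝ) = (j' : ℝ) := by push_cast at hj5; linarith
  exact_mod_cast this

lemma bexp_surj (k : ℕ) {u : ℂ} (hu : u ^ 5 = (-1 : ℂ) ^ k) :
    ∃ j ∈ Finset.Icc 1 5, u = bexp k j := by
  classical
  set F : Finset ℂ := (Finset.Icc 1 5).image (bexp k) with hF
  have hinj : Set.InjOn (bexp k) (Finset.Icc 1 5 : Finset ℕ) := by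
    intro a ha b hb hab
    exact bexp_inj k a (by simpa using ha) b (by simpa using hb) hab
  have hcardF : F.card = 5 := by
    rw [hF, Finset.card_image_of_injOn hinj]
    simp
  have hsub : F ⊆ (Polynomial.nthRoots 5 ((-1 : ℂ) ^ k)).toFinset := by
    intro t ht
    obtain ⟨j, hj, rfl⟩ := Finset.mem_image.mp ht
    rw [Multiset.mem_toFinset, Polynomial.mem_nthRoots (by norm_num)]
    exact bexp_pow5 k j
  have hcard2 : (Polynomial.nthRoots 5 ((-1 : ℂ) ^ k)).toFinset.card ≤ 5 :=
    (Multiset.toFinset_card_le _).trans (Polynomial.card_nthRoots 5 _)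
  have heq : F = (Polynomial.nthRoots 5 ((-1 : ℂ) ^ k)).toFinset :=
    Finset.eq_of_subset_of_card_le hsub (by omega)
  have hmem : u ∈ F := by
    rw [heq, Multiset.mem_toFinset, Polynomial.mem_nthRoots (by norm_num)]
    exact hu
  obtain ⟨j, hj, hju⟩ := Finset.mem_image.mp hmem
  exact ⟨j, hj, hju.symm⟩

end TightSix

/-- Every tight Euclidean 6-design `(X, w)` in `ℝ²` supported by two
concentric spheres of distinct positive radii `r 1 ≠ r 2` coincides, after applying a
suitable orthogonal transformation of `ℝ²`, with Bajnok's configuration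
`{b_{kj} : 1 ≤ j ≤ 5, k = 1, 2}`, and its weight satisfies `w(b_{kj}) = c / r_k ^ 5`
for some constant `c > 0`. -/
theorem tight_euclidean_six_design_dim_two_unique
    (r : ℕ → ℝ) (hr1 : 0 < r 1) (hr2 : 0 < r 2) (hrne : r 1 ≠ r 2)
    (X : Finset (Euc 2)) (w : Euc 2 → ℝ)
    (hne : X.Nonempty) (hw : ∀ x ∈ X, 0 < w x)
    (hsupp : X.image (fun x => ‖x‖) = {r 1, r 2})
    (ht : IsTightDesign 2 3 X w) :
    ∃ (g : Euc 2 ≃ₗᵢ[ℝ] Euc 2) (c : ℝ), 0 < c ∧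
      (↑X : Set (Euc 2)) =
        {y | ∃ k ∈ Finset.Icc 1 2, ∃ j ∈ Finset.Icc 1 5, y = g (bajnokPt (r k) k j)} ∧
      ∀ k ∈ Finset.Icc 1 2, ∀ j ∈ Finset.Icc 1 5,
        w (g (bajnokPt (r k) k j)) = c / r k ^ 5 := by
  classical
  open TightSix in
  obtain ⟨⟨hdes', hcard1⟩, hcard2⟩ := ht
  have hdes : IsEuclideanDesign 2 6 X w := hdes'
  have hX10 : X.card = 10 := by rw [hcard1, hcard2]; norm_num [Nat.choose]
  set Xf : ℕ → Finset (Euc 2) := fun k => X.filter (fun x => ‖x‖ = r k) with hXf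
  have hXfsub : ∀ k, Xf k ⊆ X := fun k => Finset.filter_subset _ _
  have hnormf : ∀ k, ∀ x ∈ Xf k, ‖x‖ = r k := fun k x hx => (Finset.mem_filter.mp hx).2
  have hrpos : ∀ k, k = 1 ∨ k = 2 → 0 < r k := by
    rintro k (rfl | rfl)
    · exact hr1
    · exact hr2
  have hrkne : ∀ k, k = 1 ∨ k = 2 → (r k : ℂ) ≠ 0 :=
    fun k hk => Complex.ofReal_ne_zero.mpr (hrpos k hk).ne'
  have hmemX : ∀ x ∈ X, ‖x‖ = r 1 ∨ ‖x‖ = r 2 := by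
    intro x hx
    have h1 : ‖x‖ ∈ X.image (fun x => ‖x‖) := Finset.mem_image_of_mem _ hx
    rw [hsupp] at h1
    simpa using h1
  have hfilter2 : X.filter (fun x => ¬ ‖x‖ = r 1) = Xf 2 := by
    ext x
    simp only [Finset.mem_filter, hXf]
    constructor
    · rintro ⟨hx, hne1⟩
      exact ⟨hx, (hmemX x hx).resolve_left hne1⟩
    · rintro ⟨hx, h2⟩
      exact ⟨hx, fun h1 => hrne (h1.symm.trans h2)⟩
  have hsplitC : ∀ f : Euc 2 → ℂ, ∑ x ∈ X, f x = ∑ x ∈ Xf 1, f x + ∑ x ∈ Xf 2, f x := by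
    intro f
    rw [← Finset.sum_filter_add_sum_filter_not X (fun x => ‖x‖ = r 1) f, hfilter2]
  have hcardsum : (Xf 1).card + (Xf 2).card = 10 := by
    rw [← hX10, ← hfilter2]
    exact Finset.card_filter_add_card_filter_not _
  set S : ℕ → ℕ → ℂ := fun k m => ∑ x ∈ Xf k, (w x : ℂ) * (zC x) ^ m with hS
  have hS0 : ∀ m b : ℕ, 1 ≤ m → m + 2 * b ≤ 6 →
      ((r 1 : ℂ)) ^ (2*b) * S 1 m + ((r 2 : ℂ)) ^ (2*b) * S 2 m = 0 := by
    intro m b hm hmb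
    have h := momC r hr1 hr2 X w hsupp hdes hm hmb
    rw [hsplitC] at h
    have hk : ∀ k : ℕ, ∑ x ∈ Xf k, (w x : ℂ) * monC m b x
        = ((r k : ℂ)) ^ (2*b) * S k m := by
      intro k
      rw [hS, Finset.mul_sum]
      refine Finset.sum_congr rfl fun x hx => ?_
      rw [monC, hnormf k x hx]
      ring
    rw [hk 1, hk 2] at h
    exact h
  have hrsqne : (r 1 : ℝ)^2 ≠ (r 2)^2 := by
    intro h
    rcases lt_or_gt_of_ne hrne with hlt | hlt
    · exact absurd h (ne_of_lt (by nlinarith))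
    · exact absurd h (ne_of_gt (by nlinarith))
  have hSm : ∀ m : ℕ, 1 ≤ m → m ≤ 4 → S 1 m = 0 ∧ S 2 m = 0 := by
    intro m hm hm4
    have h0 := hS0 m 0 hm (by omega)
    have h1 := hS0 m 1 hm (by omega)
    norm_num at h0 h1
    -- h0 : S 1 m + S 2 m = 0, h1 : r1^2 * S 1 m + r2^2 * S 2 m = 0
    have hdne : ((r 2:ℂ)^2 - (r 1:ℂ)^2) ≠ 0 := by
      rw [sub_ne_zero]
      intro hcontra
      apply hrsqne
      exact_mod_cast hcontra.symm
    have hd : ((r 2:ℂ)^2 - (r 1:ℂ)^2) * S 2 m = 0 := by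
      linear_combination h1 - ((r 1:ℂ))^2 * h0
    have hS2 : S 2 m = 0 := by
      rcases mul_eq_zero.mp hd with h | h
      · exact absurd h hdne
      · exact h
    have hS1 : S 1 m = 0 := by linear_combination h0 - hS2
    exact ⟨hS1, hS2⟩
  have hS5 : S 1 5 + S 2 5 = 0 := by
    have h := hS0 5 0 (by norm_num) (by norm_num)
    norm_num at h
    exact h
  set ζ : ℕ → Euc 2 → ℂ := fun k x => zC x / (r k : ℂ) with hζ
  have hzr : ∀ k, k = 1 ∨ k = 2 → ∀ x : Euc 2, zC x = (r k : ℂ) * ζ k x := by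
    intro k hk x
    simp only [hζ]
    rw [mul_comm, div_mul_cancel₀ _ (hrkne k hk)]
  have habsζ : ∀ k, k = 1 ∨ k = 2 → ∀ x ∈ Xf k, ‖ζ k x‖ = 1 := by
    intro k hk x hx
    rw [hζ]
    simp only [norm_div, abs_zC, Complex.norm_real, Real.norm_eq_abs, hnormf k x hx]
    rw [abs_of_pos (hrpos k hk)]
    exact div_self (hrpos k hk).ne'
  have hmomζ : ∀ k, k = 1 ∨ k = 2 → ∀ m : ℕ, 1 ≤ m → m ≤ 4 →
      ∑ x ∈ Xf k, (w x : ℂ) * (ζ k x) ^ m = 0 := by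
    intro k hk m hm hm4
    have hSk : S k m = 0 := by
      rcases hk with rfl | rfl
      · exact (hSm m hm hm4).1
      · exact (hSm m hm hm4).2
    have heq : ∑ x ∈ Xf k, (w x : ℂ) * (ζ k x) ^ m = (1 / (r k : ℂ)^m) * S k m := by
      rw [hS, Finset.mul_sum]
      refine Finset.sum_congr rfl fun x hx => ?_
      rw [hζ, div_pow]
      ring
    rw [heq, hSk, mul_zero]
  have hwpos : ∀ k, ∀ x ∈ Xf k, 0 < w x := fun k x hx => hw x (hXfsub k hx)
  have hXfne : ∀ k, k = 1 ∨ k = 2 → (Xf k).Nonempty := by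
    intro k hk
    have hmem : r k ∈ X.image (fun x => ‖x‖) := by
      rw [hsupp]
      rcases hk with rfl | rfl <;> simp
    obtain ⟨x, hx, hxr⟩ := Finset.mem_image.mp hmem
    exact ⟨x, Finset.mem_filter.mpr ⟨hx, hxr⟩⟩
  have hge5 : ∀ k, k = 1 ∨ k = 2 → 5 ≤ (Xf k).card :=
    fun k hk => card_ge_five (habsζ k hk) (hmomζ k hk) (hwpos k) (hXfne k hk)
  have hcard5 : ∀ k, k = 1 ∨ k = 2 → (Xf k).card = 5 := by
    have h1 := hge5 1 (Or.inl rfl)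
    have h2 := hge5 2 (Or.inr rfl)
    rintro k (rfl | rfl) <;> omega
  have hinjζ : ∀ k, k = 1 ∨ k = 2 → Set.InjOn (ζ k) (Xf k) := by
    intro k hk x hx y hy hxy
    apply zC_inj
    rw [hzr k hk x, hzr k hk y, hxy]
  have hstruct : ∀ k, k = 1 ∨ k = 2 →
      (∀ x ∈ Xf k, w x = (∑ y ∈ Xf k, w y) / 5) ∧
      (∀ x ∈ Xf k, ∀ y ∈ Xf k, ζ k x ^ 5 = ζ k y ^ 5) :=
    fun k hk => structure_five (habsζ k hk) (hmomζ k hk) (hwpos k) (hcard5 k hk)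
  set W : ℕ → ℝ := fun k => ∑ y ∈ Xf k, w y with hWdef
  have hWpos : ∀ k, k = 1 ∨ k = 2 → 0 < W k :=
    fun k hk => Finset.sum_pos (fun x hx => hwpos k x hx) (hXfne k hk)
  obtain ⟨x1, hx1⟩ := hXfne 1 (Or.inl rfl)
  obtain ⟨x2, hx2⟩ := hXfne 2 (Or.inr rfl)
  set v : ℕ → ℂ := fun k => if k = 1 then (ζ 1 x1)^5 else (ζ 2 x2)^5 with hv
  have hv5 : ∀ k, k = 1 ∨ k = 2 → ∀ x ∈ Xf k, ζ k x ^ 5 = v k := by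
    rintro k (rfl | rfl) x hx
    · rw [hv]
      simp only [if_pos rfl]
      exact (hstruct 1 (Or.inl rfl)).2 x hx x1 hx1
    · rw [hv]
      norm_num
      exact (hstruct 2 (Or.inr rfl)).2 x hx x2 hx2
  have habsv : ∀ k, k = 1 ∨ k = 2 → ‖v k‖ = 1 := by
    intro k hk
    have hx : ∃ x ∈ Xf k, True := by
      obtain ⟨x, hx⟩ := hXfne k hk
      exact ⟨x, hx, trivial⟩
    obtain ⟨x, hxk, -⟩ := hx
    rw [← hv5 k hk x hxk, norm_pow, habsζ k hk x hxk, one_pow]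
  have hSk5 : ∀ k, k = 1 ∨ k = 2 → S k 5 = (r k:ℂ)^5 * (((W k : ℝ):ℂ) * v k) := by
    intro k hk
    simp only [hS]
    have hterm : ∀ x ∈ Xf k, (w x : ℂ) * (zC x) ^ 5 = (r k:ℂ)^5 * ((w x:ℂ) * v k) := by
      intro x hx
      rw [hzr k hk x, mul_pow, ← hv5 k hk x hx]
      ring
    rw [Finset.sum_congr rfl hterm, ← Finset.mul_sum, ← Finset.sum_mul]
    congr 2
    rw [hWdef]
    push_cast
    rfl
  have hE : (r 1:ℂ)^5 * (((W 1 : ℝ):ℂ) * v 1) + (r 2:ℂ)^5 * (((W 2 : ℝ):ℂ) * v 2) = 0 := by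
    rw [← hSk5 1 (Or.inl rfl), ← hSk5 2 (Or.inr rfl)]
    exact hS5
  set A : ℝ := r 1 ^ 5 * W 1 with hA
  set B : ℝ := r 2 ^ 5 * W 2 with hB
  have hApos : 0 < A := mul_pos (pow_pos hr1 5) (hWpos 1 (Or.inl rfl))
  have hBpos : 0 < B := mul_pos (pow_pos hr2 5) (hWpos 2 (Or.inr rfl))
  have hE' : ((A:ℝ):ℂ) * v 1 = -(((B:ℝ):ℂ) * v 2) := by
    rw [hA, hB]
    push_cast
    linear_combination hE
  have hAB : A = B := by
    have habs := congrArg (‖·‖) hE'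
    rw [norm_mul, norm_neg, norm_mul, habsv 1 (Or.inl rfl), habsv 2 (Or.inr rfl),
      Complex.norm_real, Complex.norm_real, Real.norm_eq_abs, Real.norm_eq_abs, abs_of_pos hApos, abs_of_pos hBpos,
      mul_one, mul_one] at habs
    exact habs
  have hv21 : v 2 = - v 1 := by
    have hBne : ((B:ℝ):ℂ) ≠ 0 := Complex.ofReal_ne_zero.mpr hBpos.ne'
    rw [hAB] at hE'
    apply mul_left_cancel₀ hBne
    rw [mul_neg, hE', neg_neg]
  set c : ℝ := A / 5 with hc
  have hcpos : 0 < c := by positivity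
  have hwc : ∀ k, k = 1 ∨ k = 2 → ∀ x ∈ Xf k, w x = c / r k ^ 5 := by
    intro k hk x hx
    have h1 := (hstruct k hk).1 x hx
    rw [h1, hc]
    rcases hk with rfl | rfl
    · rw [hA]
      field_simp
      ring
    · rw [hAB, hB]
      field_simp
      ring
  have hv1ne : v 1 ≠ 0 := by
    intro h
    have := habsv 1 (Or.inl rfl)
    rw [h] at this
    simp at this
  have hnv1ne : -v 1 ≠ 0 := neg_ne_zero.mpr hv1ne
  set φ : ℝ := Complex.arg (- v 1) / 5 with hφ
  set u₀ : Circle := Circle.exp φ with hu₀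
  have hα : (u₀ : ℂ) = Complex.exp ((φ:ℂ) * Complex.I) := Circle.coe_exp φ
  have hα5 : (u₀:ℂ)^5 = - v 1 := by
    rw [hα, ← Complex.exp_nat_mul]
    have harg : ((5:ℕ):ℂ) * ((φ:ℂ) * Complex.I)
        = ((Complex.arg (-v 1) : ℝ) : ℂ) * Complex.I := by
      rw [hφ]
      push_cast
      ring
    rw [harg]
    have h2 := Complex.norm_mul_exp_arg_mul_I (- v 1)
    rw [show ‖-v 1‖ = 1 by rw [norm_neg]; exact habsv 1 (Or.inl rfl)] at h2
    simpa using h2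
  have hαne : (u₀:ℂ) ≠ 0 := Circle.coe_ne_zero u₀
  have hbridge : ∀ k, k = 1 ∨ k = 2 → ∀ j ∈ Finset.Icc 1 5,
      ∃ x ∈ Xf k, (rotE u₀) (bajnokPt (r k) k j) = x := by
    intro k hk j hj
    set u'' : ℂ := (u₀:ℂ) * bexp k j with hu''
    have hu5 : u'' ^ 5 = v k := by
      rw [hu'', mul_pow, hα5, bexp_pow5]
      rcases hk with rfl | rfl
      · rw [pow_one]
        ring
      · rw [hv21]
        norm_num
    obtain ⟨x, hx, hζx⟩ := root_surj (hinjζ k hk) (hcard5 k hk) (hv5 k hk) hu5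
    refine ⟨x, hx, ?_⟩
    apply zC_inj
    rw [zC_rotE, zC_bajnok, hzr k hk x, hζx, hu'']
    ring
  have hforward : ∀ x ∈ X, ∃ k ∈ Finset.Icc 1 2, ∃ j ∈ Finset.Icc 1 5,
      x = (rotE u₀) (bajnokPt (r k) k j) := by
    intro x hx
    have hk2 : ∃ k, (k = 1 ∨ k = 2) ∧ x ∈ Xf k := by
      rcases hmemX x hx with h | h
      · exact ⟨1, Or.inl rfl, Finset.mem_filter.mpr ⟨hx, h⟩⟩
      · exact ⟨2, Or.inr rfl, Finset.mem_filter.mpr ⟨hx, h⟩⟩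
    obtain ⟨k, hk, hxk⟩ := hk2
    set u' : ℂ := ζ k x / (u₀:ℂ) with hu'
    have hu'5 : u' ^ 5 = (-1:ℂ)^k := by
      rw [hu', div_pow, hv5 k hk x hxk, hα5]
      rcases hk with rfl | rfl
      · rw [pow_one]
        rw [div_eq_iff hnv1ne]
        ring
      · rw [hv21]
        norm_num
        exact hv1ne
    obtain ⟨j, hj, hj'⟩ := bexp_surj k hu'5
    refine ⟨k, ?_, j, hj, ?_⟩
    · rcases hk with rfl | rfl <;> simp
    · apply zC_inj
      rw [zC_rotE, zC_bajnok, hzr k hk x]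
      have h2 : ζ k x = (u₀:ℂ) * u' := by
        rw [hu']
        field_simp
      rw [h2, hj']
      ring
  refine ⟨rotE u₀, c, hcpos, ?_, ?_⟩
  · ext xx
    simp only [Finset.mem_coe, Set.mem_setOf_eq]
    constructor
    · intro hx
      exact hforward xx hx
    · rintro ⟨k, hk, j, hj, rfl⟩
      have hk' : k = 1 ∨ k = 2 := by
        rw [Finset.mem_Icc] at hk
        omega
      obtain ⟨x, hx, hgx⟩ := hbridge k hk' j hj
      rw [hgx]
      exact hXfsub k hx
  · intro k hk j hj
    have hk' : k = 1 ∨ k = 2 := by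
      rw [Finset.mem_Icc] at hk
      omega
    obtain ⟨x, hx, hgx⟩ := hbridge k hk' j hj
    rw [hgx]
    exact hwc k hk' x hx

end
end

section
/- There exists no tight Euclidean 6-design in ℝ² supported by two concentric spheres whose weight function is constant on all of X. -/
open MeasureTheory Metric Finset
open scoped Classical RealInnerProductSpace

noncomputable section

def rotMap (c s : ℝ) : Euc 2 → Euc 2 := fun x =>
  (WithLp.equiv 2 (Fin 2 → ℝ)).symm ![c * x 0 - s * x 1, s * x 0 + c * x 1]

lemma rotMap_apply0 (c s : ℝ) (x : Euc 2) : rotMap c s x 0 = c * x 0 - s * x 1 := rfl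
lemma rotMap_apply1 (c s : ℝ) (x : Euc 2) : rotMap c s x 1 = s * x 0 + c * x 1 := rfl

def rotEquiv (c s : ℝ) (h : c ^ 2 + s ^ 2 = 1) : Euc 2 ≃ᵢ Euc 2 where
  toFun := rotMap c s
  invFun := rotMap c (-s)
  left_inv := by
    intro x
    ext i
    fin_cases i
    · show rotMap c (-s) (rotMap c s x) 0 = x 0
      rw [rotMap_apply0, rotMap_apply0, rotMap_apply1]
      linear_combination (x 0) * h
    · show rotMap c (-s) (rotMap c s x) 1 = x 1
      rw [rotMap_apply1, rotMap_apply0, rotMap_apply1]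
      linear_combination (x 1) * h
  right_inv := by
    intro x
    ext i
    fin_cases i
    · show rotMap c s (rotMap c (-s) x) 0 = x 0
      rw [rotMap_apply0, rotMap_apply0, rotMap_apply1]
      linear_combination (x 0) * h
    · show rotMap c s (rotMap c (-s) x) 1 = x 1
      rw [rotMap_apply1, rotMap_apply0, rotMap_apply1]
      linear_combination (x 1) * h
  isometry_toFun := by
    apply Isometry.of_dist_eq
    intro x y
    rw [EuclideanSpace.dist_eq, EuclideanSpace.dist_eq]
    congr 1
    rw [Fin.sum_univ_two, Fin.sum_univ_two]
    simp only [rotMap_apply0, rotMap_apply1, Real.dist_eq]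
    rw [sq_abs, sq_abs, sq_abs, sq_abs]
    linear_combination ((x 0 - y 0) ^ 2 + (x 1 - y 1) ^ 2) * h

lemma integral_sphere_zero (e : Euc 2 ≃ᵢ Euc 2) (he0 : e 0 = 0)
    {f : Euc 2 → ℝ} (hf : ∀ x, f (e x) = - f x) (r : ℝ) :
    ∫ y in Metric.sphere (0 : Euc 2) r, f y ∂(μH[(1:ℝ)]) = 0 := by
  set μ : Measure (Euc 2) := μH[(1:ℝ)]
  have hpre : e ⁻¹' (Metric.sphere (0 : Euc 2) r) = Metric.sphere (0 : Euc 2) r := by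
    ext y
    simp only [Set.mem_preimage, Metric.mem_sphere]
    rw [← e.dist_eq y 0, he0]
  have hmap : Measure.map e (μ.restrict (Metric.sphere (0 : Euc 2) r))
      = μ.restrict (Metric.sphere (0 : Euc 2) r) := by
    conv_lhs => rw [← hpre]
    rw [← Measure.restrict_map e.continuous.measurable
      Metric.isClosed_sphere.measurableSet,
      (e.measurePreserving_hausdorffMeasure 1).map_eq]
  have he : ∫ y in Metric.sphere (0 : Euc 2) r, f y ∂μ
      = ∫ y in Metric.sphere (0 : Euc 2) r, f (e y) ∂μ := by
    conv_lhs => rw [← hmap]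
    exact MeasureTheory.integral_map_equiv e.toHomeomorph.toMeasurableEquiv f
  have := he
  simp only [hf, integral_neg] at this
  linarith

lemma sphAvg_eq_zero (e : Euc 2 ≃ᵢ Euc 2) (he0 : e 0 = 0)
    {f : Euc 2 → ℝ} (hf : ∀ x, f (e x) = - f x) (h0 : f 0 = 0) (r : ℝ) :
    sphAvg 2 r f = 0 := by
  unfold sphAvg
  split
  · exact h0
  · have h1 : ((2 : ℕ) : ℝ) - 1 = (1 : ℝ) := by norm_num
    rw [h1, setAverage_eq, integral_sphere_zero e he0 hf r, smul_zero]

open MvPolynomial in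
def PQ : ℕ → MvPolynomial (Fin 2) ℝ × MvPolynomial (Fin 2) ℝ
  | 0 => (1, 0)
  | k+1 => (X 0 * (PQ k).1 - X 1 * (PQ k).2, X 0 * (PQ k).2 + X 1 * (PQ k).1)

open MvPolynomial in
def Rp : MvPolynomial (Fin 2) ℝ := X 0 ^ 2 + X 1 ^ 2

def zc (x : Euc 2) : ℂ := ⟨x 0, x 1⟩
@[simp] lemma zc_re (x : Euc 2) : (zc x).re = x 0 := rfl
@[simp] lemma zc_im (x : Euc 2) : (zc x).im = x 1 := rfl

lemma evalPt_PQ (x : Euc 2) (k : ℕ) :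
    evalPt x (PQ k).1 = ((zc x) ^ k).re ∧ evalPt x (PQ k).2 = ((zc x) ^ k).im := by
  induction k with
  | zero => simp [PQ, evalPt]
  | succ k ih =>
    obtain ⟨h1, h2⟩ := ih
    constructor
    · simp only [PQ, evalPt, map_sub, map_add, map_mul, MvPolynomial.eval_X]
      rw [pow_succ, Complex.mul_re]
      simp only [evalPt] at h1 h2
      rw [h1, h2, zc_re, zc_im]; ring
    · simp only [PQ, evalPt, map_sub, map_add, map_mul, MvPolynomial.eval_X]
      rw [pow_succ, Complex.mul_im]
      simp only [evalPt] at h1 h2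
      rw [h1, h2, zc_re, zc_im]; ring

lemma evalPt_Rp (x : Euc 2) : evalPt x Rp = Complex.normSq (zc x) := by
  simp [Rp, evalPt, Complex.normSq_apply, zc]
  ring

lemma totalDegree_PQ (k : ℕ) :
    (PQ k).1.totalDegree ≤ k ∧ (PQ k).2.totalDegree ≤ k := by
  induction k with
  | zero => simp [PQ]
  | succ k ih =>
    obtain ⟨h1, h2⟩ := ih
    constructor
    · refine le_trans (MvPolynomial.totalDegree_sub _ _) ?_
      refine max_le ?_ ?_ <;>
        refine le_trans (MvPolynomial.totalDegree_mul _ _) ?_ <;>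
        simp only [MvPolynomial.totalDegree_X] <;> omega
    · refine le_trans (MvPolynomial.totalDegree_add _ _) ?_
      refine max_le ?_ ?_ <;>
        refine le_trans (MvPolynomial.totalDegree_mul _ _) ?_ <;>
        simp only [MvPolynomial.totalDegree_X] <;> omega

lemma totalDegree_Rp : Rp.totalDegree ≤ 2 := by
  refine le_trans (MvPolynomial.totalDegree_add _ _) ?_
  simp [MvPolynomial.totalDegree_X_pow]

lemma evalPt_mul (x : Euc 2) (p q : MvPolynomial (Fin 2) ℝ) :
    evalPt x (p * q) = evalPt x p * evalPt x q := by simp [evalPt]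

lemma evalPt_pow (x : Euc 2) (p : MvPolynomial (Fin 2) ℝ) (m : ℕ) :
    evalPt x (p ^ m) = evalPt x p ^ m := by simp [evalPt]

lemma zc_rotMap (c s : ℝ) (x : Euc 2) : zc (rotMap c s x) = Complex.mk c s * zc x := by
  apply Complex.ext
  · rw [zc_re, rotMap_apply0, Complex.mul_re, zc_re, zc_im]
  · rw [zc_im, rotMap_apply1, Complex.mul_im, zc_re, zc_im]; ring

lemma zc_zero : zc 0 = 0 := by
  apply Complex.ext <;> simp [zc_re, zc_im]

lemma sphAvg_moment_zero (j k : ℕ) (hk : 1 ≤ k) (r : ℝ) :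
    sphAvg 2 r (fun y => evalPt y (Rp ^ j * (PQ k).1)) = 0 ∧
    sphAvg 2 r (fun y => evalPt y (Rp ^ j * (PQ k).2)) = 0 := by
  set θ : ℝ := Real.pi / k
  have hcs : Real.cos θ ^ 2 + Real.sin θ ^ 2 = 1 := by
    rw [add_comm]; exact Real.sin_sq_add_cos_sq θ
  set e := rotEquiv (Real.cos θ) (Real.sin θ) hcs
  have he0 : e 0 = 0 := by
    show rotMap _ _ 0 = 0
    ext i
    fin_cases i
    · show Real.cos θ * (0 : Euc 2) 0 - Real.sin θ * (0 : Euc 2) 1 = 0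
      simp
    · show Real.sin θ * (0 : Euc 2) 0 + Real.cos θ * (0 : Euc 2) 1 = 0
      simp
  have hu : (Complex.mk (Real.cos θ) (Real.sin θ)) ^ k = -1 := by
    have h1 : Complex.mk (Real.cos θ) (Real.sin θ) = Complex.exp (θ * Complex.I) := by
      rw [Complex.mk_eq_add_mul_I, Complex.exp_mul_I, ← Complex.ofReal_cos, ← Complex.ofReal_sin]
    rw [h1, ← Complex.exp_nat_mul]
    have h2 : (k : ℂ) * (θ * Complex.I) = Real.pi * Complex.I := by
      have hk0 : (k : ℂ) ≠ 0 := Nat.cast_ne_zero.mpr (by omega)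
      have : (θ : ℂ) = (Real.pi : ℂ) / k := by
        push_cast [θ, Complex.ofReal_div]
        norm_num
      rw [this]; field_simp
    rw [h2, Complex.exp_pi_mul_I]
  have hnsq : Complex.normSq (Complex.mk (Real.cos θ) (Real.sin θ)) = 1 := by
    rw [Complex.normSq_mk]; nlinarith [hcs]
  have hzrot : ∀ x : Euc 2, zc (e x) = Complex.mk (Real.cos θ) (Real.sin θ) * zc x :=
    fun x => zc_rotMap _ _ x
  have hfe1 : ∀ x : Euc 2, evalPt (e x) (Rp ^ j * (PQ k).1) = - evalPt x (Rp ^ j * (PQ k).1) := by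
    intro x
    rw [evalPt_mul, evalPt_mul, evalPt_pow, evalPt_pow, (evalPt_PQ _ k).1, (evalPt_PQ _ k).1,
      evalPt_Rp, evalPt_Rp, hzrot, mul_pow, hu, Complex.normSq_mul, hnsq, one_mul]
    rw [neg_one_mul, Complex.neg_re]
    ring
  have hfe2 : ∀ x : Euc 2, evalPt (e x) (Rp ^ j * (PQ k).2) = - evalPt x (Rp ^ j * (PQ k).2) := by
    intro x
    rw [evalPt_mul, evalPt_mul, evalPt_pow, evalPt_pow, (evalPt_PQ _ k).2, (evalPt_PQ _ k).2,
      evalPt_Rp, evalPt_Rp, hzrot, mul_pow, hu, Complex.normSq_mul, hnsq, one_mul]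
    rw [neg_one_mul, Complex.neg_im]
    ring
  have h01 : evalPt (0 : Euc 2) (Rp ^ j * (PQ k).1) = 0 := by
    rw [evalPt_mul, (evalPt_PQ _ k).1, zc_zero, zero_pow (by omega), Complex.zero_re, mul_zero]
  have h02 : evalPt (0 : Euc 2) (Rp ^ j * (PQ k).2) = 0 := by
    rw [evalPt_mul, (evalPt_PQ _ k).2, zc_zero, zero_pow (by omega), Complex.zero_im, mul_zero]
  exact ⟨sphAvg_eq_zero e he0 hfe1 h01 r, sphAvg_eq_zero e he0 hfe2 h02 r⟩

lemma newton_small (m : ℕ) (hm1 : 1 ≤ m) (hm4 : m ≤ 4) (g : Fin m → ℂ)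
    (h1 : ∑ i, g i = 0) (h2 : ∑ i, g i ^ 2 = 0)
    (h3 : ∑ i, g i ^ 3 = 0) (h4 : ∑ i, g i ^ 4 = 0) :
    ∃ i, g i = 0 := by
  interval_cases m
  · refine ⟨0, ?_⟩
    rw [Fin.sum_univ_one] at h1; exact h1
  · refine ⟨0, ?_⟩
    rw [Fin.sum_univ_two] at h1 h2
    by_contra h0
    have hprod : g 0 * g 1 = 0 := by linear_combination ((g 0 + g 1) * h1 - h2) / 2
    rcases mul_eq_zero.mp hprod with h | h
    · exact h0 h
    · apply h0; linear_combination h1 - h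
  · rw [Fin.sum_univ_three] at h1 h2 h3
    have hprod : g 0 * g 1 * g 2 = 0 := by
      linear_combination ((g 0 * g 1 + g 0 * g 2 + g 1 * g 2) * h1
        - (g 0 + g 1 + g 2) * h2 + h3) / 3
    rcases mul_eq_zero.mp hprod with h | h
    · rcases mul_eq_zero.mp h with h | h
      exacts [⟨0, h⟩, ⟨1, h⟩]
    · exact ⟨2, h⟩
  · rw [Fin.sum_univ_four] at h1 h2 h3 h4
    have hprod : g 0 * g 1 * g 2 * g 3 = 0 := by
      linear_combination
        ((g 0 * g 1 * g 2 + g 0 * g 1 * g 3 + g 0 * g 2 * g 3 + g 1 * g 2 * g 3) * h1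
        - (g 0 * g 1 + g 0 * g 2 + g 0 * g 3 + g 1 * g 2 + g 1 * g 3 + g 2 * g 3) * h2
        + (g 0 + g 1 + g 2 + g 3) * h3 - h4) / 4
    rcases mul_eq_zero.mp hprod with h | h
    · rcases mul_eq_zero.mp h with h | h
      · rcases mul_eq_zero.mp h with h | h
        exacts [⟨0, h⟩, ⟨1, h⟩]
      · exact ⟨2, h⟩
    · exact ⟨3, h⟩

lemma newton_five (g : Fin 5 → ℂ)
    (h1 : ∑ i, g i = 0) (h2 : ∑ i, g i ^ 2 = 0)
    (h3 : ∑ i, g i ^ 3 = 0) (h4 : ∑ i, g i ^ 4 = 0) :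
    ∑ i, g i ^ 5 = 5 * (g 0 * g 1 * g 2 * g 3 * g 4) := by
  rw [Fin.sum_univ_five] at h1 h2 h3 h4 ⊢
  set a := g 0; set b := g 1; set c := g 2; set d := g 3; set e := g 4
  linear_combination
    (a*b*c + a*b*d + a*b*e + a*c*d + a*c*e + a*d*e + b*c*d + b*c*e + b*d*e + c*d*e) * h2
    - (a*b + a*c + a*d + a*e + b*c + b*d + b*e + c*d + c*e + d*e) * h3
    + (a + b + c + d + e) * h4
    - (a*b*c*d + a*b*c*e + a*b*d*e + a*c*d*e + b*c*d*e) * h1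

lemma norm_sq_eq (x : Euc 2) : ‖x‖ ^ 2 = x 0 ^ 2 + x 1 ^ 2 := by
  rw [EuclideanSpace.norm_eq, Real.sq_sqrt (by positivity), Fin.sum_univ_two,
    Real.norm_eq_abs, Real.norm_eq_abs, sq_abs, sq_abs]

lemma normSq_zc (x : Euc 2) : Complex.normSq (zc x) = ‖x‖ ^ 2 := by
  rw [norm_sq_eq, Complex.normSq_apply, zc_re, zc_im]; ring

open MvPolynomial in
lemma dim_le_nine (X : Finset (Euc 2)) (ρ : ℝ)
    (hS : ∀ y ∈ suppSpheres 2 X, y = (0 : Euc 2) ∨ ‖y‖ = ρ) :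
    dimPolOn 2 3 (suppSpheres 2 X) ≤ 9 := by
  set S : Set (Euc 2) := suppSpheres 2 X with hSdef
  set u : MvPolynomial (Fin 2) ℝ := MvPolynomial.X 0 with hu
  set v : MvPolynomial (Fin 2) ℝ := MvPolynomial.X 1 with hv
  set q : MvPolynomial (Fin 2) ℝ := (u ^ 2 + v ^ 2 - C (ρ ^ 2)) * u with hq
  set g : Fin 9 → MvPolynomial (Fin 2) ℝ :=
    ![1, u, v, u ^ 2, u * v, v ^ 2, u ^ 2 * v, u * v ^ 2, v ^ 3] with hg
  have hq0 : polyRestrict 2 S q = 0 := by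
    funext y
    obtain ⟨y, hy⟩ := y
    show evalPt y q = 0
    have hev : evalPt y q = (y 0 ^ 2 + y 1 ^ 2 - ρ ^ 2) * y 0 := by
      simp [evalPt, hq, hu, hv]
    rcases hS y hy with h0 | hρ
    · rw [hev, h0]
      have : (0 : Euc 2) 0 = 0 := rfl
      have h1 : (0 : Euc 2) 1 = 0 := rfl
      rw [this, h1]; ring
    · rw [hev, ← norm_sq_eq, hρ]; ring
  have hsub : (MvPolynomial.restrictTotalDegree (Fin 2) ℝ 3)
      ≤ Submodule.span ℝ (insert q (Set.range g)) := by
    intro p hp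
    rw [MvPolynomial.mem_restrictTotalDegree] at hp
    rw [← p.support_sum_monomial_coeff]
    apply Submodule.sum_mem
    intro d hd
    have hdeg : d 0 + d 1 ≤ 3 := by
      have h1 := MvPolynomial.le_totalDegree hd
      have h2 : (d.sum fun _ e => e) = d 0 + d 1 := by
        rw [Finsupp.sum_fintype _ _ (fun _ => rfl), Fin.sum_univ_two]
      omega
    have hmon : monomial d (coeff d p) = (coeff d p) • (u ^ (d 0) * v ^ (d 1)) := by
      rw [MvPolynomial.monomial_eq, Finsupp.prod_fintype _ _ (fun _ => pow_zero _),
        Fin.prod_univ_two, MvPolynomial.smul_eq_C_mul]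
    rw [hmon]
    apply Submodule.smul_mem
    have hspan : ∀ i : Fin 9, g i ∈ Submodule.span ℝ (insert q (Set.range g)) :=
      fun i => Submodule.subset_span (Set.mem_insert_iff.mpr (Or.inr ⟨i, rfl⟩))
    have hqspan : q ∈ Submodule.span ℝ (insert q (Set.range g)) :=
      Submodule.subset_span (Set.mem_insert _ _)
    have hcube : u ^ 3 ∈ Submodule.span ℝ (insert q (Set.range g)) := by
      have h3 : u ^ 3 = q + (ρ ^ 2) • u - u * v ^ 2 := by
        rw [hq, MvPolynomial.smul_eq_C_mul]; ring
      rw [h3]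
      exact Submodule.sub_mem _
        (Submodule.add_mem _ hqspan (Submodule.smul_mem _ _ (hspan 1))) (hspan 7)
    set a := d 0 with hA
    set b := d 1 with hB
    have ha3 : a ≤ 3 := by omega
    have hb3 : b ≤ 3 := by omega
    interval_cases a <;> interval_cases b <;>
      (try simp only [pow_zero, pow_one, one_mul, mul_one])
    exacts [hspan 0, hspan 2, hspan 5, hspan 8,
      hspan 1, hspan 4, hspan 7, absurd hdeg (by norm_num),
      hspan 3, hspan 6, absurd hdeg (by norm_num), absurd hdeg (by norm_num),
      hcube, absurd hdeg (by norm_num), absurd hdeg (by norm_num), absurd hdeg (by norm_num)]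
  have hmaple : PolOn 2 3 S ≤ Submodule.span ℝ (Set.range (polyRestrict 2 S ∘ g)) := by
    have h1 : PolOn 2 3 S ≤
        (Submodule.span ℝ (insert q (Set.range g))).map (polyRestrict 2 S) :=
      Submodule.map_mono hsub
    rw [Submodule.map_span, Set.image_insert_eq, hq0, Submodule.span_insert_zero,
      ← Set.range_comp] at h1
    exact h1
  have hfd : FiniteDimensional ℝ
      (Submodule.span ℝ (Set.range (polyRestrict 2 S ∘ g))) :=
    FiniteDimensional.span_of_finite ℝ (Set.finite_range _)
  calc dimPolOn 2 3 S = Module.finrank ℝ (PolOn 2 3 S) := rfl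
    _ ≤ Module.finrank ℝ (Submodule.span ℝ (Set.range (polyRestrict 2 S ∘ g))) :=
        Submodule.finrank_mono hmaple
    _ ≤ Fintype.card (Fin 9) := finrank_range_le_card _
    _ = 9 := by simp

lemma circle_ge_five (Y : Finset (Euc 2)) (r : ℝ) (hr : 0 < r)
    (hnorm : ∀ x ∈ Y, ‖x‖ = r) (hne : Y.Nonempty)
    (hks : ∀ k, 1 ≤ k → k ≤ 4 → ∑ x ∈ Y, zc x ^ k = 0) : 5 ≤ Y.card := by
  by_contra hlt
  push_neg at hlt
  have hm1 : 1 ≤ Y.card := Finset.card_pos.mpr hne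
  set m := Y.card with hm
  have e : {x // x ∈ Y} ≃ Fin m := Fintype.equivFinOfCardEq (Fintype.card_coe Y)
  set g : Fin m → ℂ := fun i => zc ((e.symm i) : Euc 2) with hgdef
  have hsum : ∀ k : ℕ, ∑ i, g i ^ k = ∑ x ∈ Y, zc x ^ k := by
    intro k
    rw [← Finset.sum_coe_sort Y (fun x => zc x ^ k)]
    exact Equiv.sum_comp e.symm (fun x => zc (x : Euc 2) ^ k)
  obtain ⟨i, hi⟩ := newton_small m hm1 (by omega) g
    (by rw [show (fun i => g i) = (fun i => g i ^ 1) by simp, hsum]; exact hks 1 (by norm_num) (by norm_num))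
    (by rw [hsum]; exact hks 2 (by norm_num) (by norm_num))
    (by rw [hsum]; exact hks 3 (by norm_num) (by norm_num))
    (by rw [hsum]; exact hks 4 (by norm_num) (by norm_num))
  have h1 : Complex.normSq (g i) = r ^ 2 := by
    rw [hgdef]
    simp only
    rw [normSq_zc, hnorm _ (e.symm i).2]
  rw [hi, map_zero] at h1
  nlinarith

lemma circle_five_sum (Y : Finset (Euc 2)) (r : ℝ)
    (hnorm : ∀ x ∈ Y, ‖x‖ = r) (hcard : Y.card = 5)
    (hks : ∀ k, 1 ≤ k → k ≤ 4 → ∑ x ∈ Y, zc x ^ k = 0) :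
    Complex.normSq (∑ x ∈ Y, zc x ^ 5) = 25 * r ^ 10 := by
  have e : {x // x ∈ Y} ≃ Fin 5 := Fintype.equivFinOfCardEq (by rw [Fintype.card_coe, hcard])
  set g : Fin 5 → ℂ := fun i => zc ((e.symm i) : Euc 2) with hgdef
  have hsum : ∀ k : ℕ, ∑ i, g i ^ k = ∑ x ∈ Y, zc x ^ k := by
    intro k
    rw [← Finset.sum_coe_sort Y (fun x => zc x ^ k)]
    exact Equiv.sum_comp e.symm (fun x => zc (x : Euc 2) ^ k)
  have h5 := newton_five g
    (by rw [show (fun i => g i) = (fun i => g i ^ 1) by simp, hsum]; exact hks 1 (by norm_num) (by norm_num))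
    (by rw [hsum]; exact hks 2 (by norm_num) (by norm_num))
    (by rw [hsum]; exact hks 3 (by norm_num) (by norm_num))
    (by rw [hsum]; exact hks 4 (by norm_num) (by norm_num))
  have hgr : ∀ i : Fin 5, Complex.normSq (g i) = r ^ 2 := by
    intro i
    rw [hgdef]
    simp only
    rw [normSq_zc, hnorm _ (e.symm i).2]
  rw [← hsum 5, h5]
  rw [map_mul, map_mul, map_mul, map_mul, map_mul]
  rw [hgr 0, hgr 1, hgr 2, hgr 3, hgr 4]
  have h25 : Complex.normSq (5 : ℂ) = 25 := by
    rw [Complex.normSq_apply]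
    norm_num
  rw [h25]; ring

lemma totalDeg_bound (j k : ℕ) (h : 2 * j + k ≤ 6) :
    (Rp ^ j * (PQ k).1).totalDegree ≤ 2 * 3 ∧ (Rp ^ j * (PQ k).2).totalDegree ≤ 2 * 3 := by
  have hpow : (Rp ^ j).totalDegree ≤ j * 2 :=
    le_trans (MvPolynomial.totalDegree_pow _ _) (Nat.mul_le_mul_left j totalDegree_Rp)
  have h1 := (totalDegree_PQ k).1
  have h2 := (totalDegree_PQ k).2
  constructor
  · refine le_trans (MvPolynomial.totalDegree_mul _ _) ?_
    omega
  · refine le_trans (MvPolynomial.totalDegree_mul _ _) ?_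
    omega

/-- There is no tight Euclidean 6-design in `ℝ²` supported by two
concentric spheres whose weight function is constant on all of `X`. -/
theorem no_tight_euclidean_six_design_constant_weight_dim_two :
    ¬ ∃ (X : Finset (Euc 2)) (w : Euc 2 → ℝ),
        X.Nonempty ∧ (∀ x ∈ X, 0 < w x) ∧
        (X.image (fun x => ‖x‖)).card = 2 ∧
        (∀ x ∈ X, ∀ y ∈ X, w x = w y) ∧
        IsTightDesign 2 3 X w := by
  rintro ⟨X, w, hne, hwpos, himg2, hconst, ⟨⟨hdesign, hcardeq⟩, hdim⟩⟩
  have hchoose : (2 + 3).choose 3 = 10 := by decide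
  rw [hchoose] at hdim
  have hcard10 : X.card = 10 := by rw [hcardeq, hdim]
  obtain ⟨r₁, r₂, hr12, himg⟩ := Finset.card_eq_two.mp himg2
  obtain ⟨x₀, hx₀⟩ := hne
  set c := w x₀ with hc
  have hcpos : 0 < c := hwpos x₀ hx₀
  have hwc : ∀ x ∈ X, w x = c := fun x hx => hconst x hx x₀ hx₀
  -- moment equations
  have hmom : ∀ j k : ℕ, 1 ≤ k → 2 * j + k ≤ 6 →
      ∑ x ∈ X, (Complex.normSq (zc x) : ℂ) ^ j * (zc x) ^ k = 0 := by
    intro j k hk hdeg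
    have hterm1 : ∀ x : Euc 2, evalPt x (Rp ^ j * (PQ k).1)
        = Complex.normSq (zc x) ^ j * ((zc x) ^ k).re := fun x => by
      rw [evalPt_mul, evalPt_pow, evalPt_Rp, (evalPt_PQ x k).1]
    have hterm2 : ∀ x : Euc 2, evalPt x (Rp ^ j * (PQ k).2)
        = Complex.normSq (zc x) ^ j * ((zc x) ^ k).im := fun x => by
      rw [evalPt_mul, evalPt_pow, evalPt_Rp, (evalPt_PQ x k).2]
    have key : ∀ p : MvPolynomial (Fin 2) ℝ, p.totalDegree ≤ 2 * 3 →
        (∀ r : ℝ, sphAvg 2 r (fun y => evalPt y p) = 0) →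
        ∑ x ∈ X, evalPt x p = 0 := by
      intro p hdp havg
      have e1 := hdesign p hdp
      rw [Finset.sum_eq_zero (fun r _ => by rw [havg r, mul_zero])] at e1
      have hcmul : ∑ x ∈ X, w x * evalPt x p = c * ∑ x ∈ X, evalPt x p := by
        rw [Finset.mul_sum]
        exact Finset.sum_congr rfl fun x hx => by rw [hwc x hx]
      rw [hcmul] at e1
      rcases mul_eq_zero.mp e1.symm with h | h
      · exact absurd h (ne_of_gt hcpos)
      · exact h
    have hs1 := key _ (totalDeg_bound j k hdeg).1
      (fun r => (sphAvg_moment_zero j k hk r).1)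
    have hs2 := key _ (totalDeg_bound j k hdeg).2
      (fun r => (sphAvg_moment_zero j k hk r).2)
    apply Complex.ext
    · rw [Complex.re_sum, Complex.zero_re, ← hs1]
      apply Finset.sum_congr rfl
      intro x hx
      rw [← Complex.ofReal_pow, Complex.re_ofReal_mul, hterm1 x]
    · rw [Complex.im_sum, Complex.zero_im, ← hs2]
      apply Finset.sum_congr rfl
      intro x hx
      rw [← Complex.ofReal_pow, Complex.im_ofReal_mul, hterm2 x]
  -- split into two circles
  set X₁ := X.filter (fun x => ‖x‖ = r₁) with hX₁
  set X₂ := X.filter (fun x => ‖x‖ = r₂) with hX₂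
  have hmem : ∀ x ∈ X, ‖x‖ = r₁ ∨ ‖x‖ = r₂ := by
    intro x hx
    have h1 : ‖x‖ ∈ X.image (fun x => ‖x‖) := Finset.mem_image_of_mem _ hx
    rw [himg] at h1
    rcases Finset.mem_insert.mp h1 with h | h
    · exact Or.inl h
    · exact Or.inr (Finset.mem_singleton.mp h)
  have hfilter : X.filter (fun x => ¬ ‖x‖ = r₁) = X₂ := by
    ext x
    simp only [Finset.mem_filter, hX₂]
    constructor
    · rintro ⟨hx, hn⟩; exact ⟨hx, (hmem x hx).resolve_left hn⟩
    · rintro ⟨hx, h2⟩; exact ⟨hx, fun hh => hr12 (hh.symm.trans h2)⟩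
  have hsplit : ∀ F : Euc 2 → ℂ, ∑ x ∈ X, F x = ∑ x ∈ X₁, F x + ∑ x ∈ X₂, F x := by
    intro F
    rw [← Finset.sum_filter_add_sum_filter_not X (fun x => ‖x‖ = r₁) F, hfilter]
  have hnormX₁ : ∀ x ∈ X₁, ‖x‖ = r₁ := fun x hx => (Finset.mem_filter.mp hx).2
  have hnormX₂ : ∀ x ∈ X₂, ‖x‖ = r₂ := fun x hx => (Finset.mem_filter.mp hx).2
  set T₁ : ℕ → ℂ := fun k => ∑ x ∈ X₁, zc x ^ k with hT₁
  set T₂ : ℕ → ℂ := fun k => ∑ x ∈ X₂, zc x ^ k with hT₂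
  have heq : ∀ j k : ℕ, 1 ≤ k → 2 * j + k ≤ 6 →
      ((r₁ : ℂ) ^ 2) ^ j * T₁ k + ((r₂ : ℂ) ^ 2) ^ j * T₂ k = 0 := by
    intro j k hk hdeg
    have h0 := hmom j k hk hdeg
    rw [hsplit] at h0
    have c1 : ∑ x ∈ X₁, (Complex.normSq (zc x) : ℂ) ^ j * zc x ^ k
        = ((r₁ : ℂ) ^ 2) ^ j * T₁ k := by
      rw [hT₁, Finset.mul_sum]
      apply Finset.sum_congr rfl
      intro x hx
      rw [normSq_zc, hnormX₁ x hx]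
      push_cast
      ring
    have c2 : ∑ x ∈ X₂, (Complex.normSq (zc x) : ℂ) ^ j * zc x ^ k
        = ((r₂ : ℂ) ^ 2) ^ j * T₂ k := by
      rw [hT₂, Finset.mul_sum]
      apply Finset.sum_congr rfl
      intro x hx
      rw [normSq_zc, hnormX₂ x hx]
      push_cast
      ring
    rw [c1, c2] at h0
    exact h0
  -- nonnegativity of radii and membership
  have hr₁mem : r₁ ∈ X.image (fun x => ‖x‖) := by
    rw [himg]; exact Finset.mem_insert_self _ _
  have hr₂mem : r₂ ∈ X.image (fun x => ‖x‖) := by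
    rw [himg]; exact Finset.mem_insert_of_mem (Finset.mem_singleton_self _)
  obtain ⟨x₁, hx₁X, hx₁n⟩ := Finset.mem_image.mp hr₁mem
  obtain ⟨x₂, hx₂X, hx₂n⟩ := Finset.mem_image.mp hr₂mem
  have hr₁nn : 0 ≤ r₁ := hx₁n ▸ norm_nonneg x₁
  have hr₂nn : 0 ≤ r₂ := hx₂n ▸ norm_nonneg x₂
  by_cases hzero : r₁ = 0 ∨ r₂ = 0
  · -- one sphere degenerates to the origin: dimension at most 9
    have h9 : dimPolOn 2 3 (suppSpheres 2 X) ≤ 9 := by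
      rcases hzero with h | h
      · refine dim_le_nine X r₂ ?_
        intro y hy
        have hy' : ∃ r ∈ ({r₁, r₂} : Finset ℝ), y ∈ Metric.sphere (0 : Euc 2) r := by
          simpa [suppSpheres, himg] using hy
        obtain ⟨r, hrmem, hysph⟩ := hy'
        rw [mem_sphere_zero_iff_norm] at hysph
        rcases Finset.mem_insert.mp hrmem with hr | hr
        · left; rw [← norm_eq_zero, hysph, hr, h]
        · right; rw [hysph, Finset.mem_singleton.mp hr]
      · refine dim_le_nine X r₁ ?_
        intro y hy
        have hy' : ∃ r ∈ ({r₁, r₂} : Finset ℝ), y ∈ Metric.sphere (0 : Euc 2) r := by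
          simpa [suppSpheres, himg] using hy
        obtain ⟨r, hrmem, hysph⟩ := hy'
        rw [mem_sphere_zero_iff_norm] at hysph
        rcases Finset.mem_insert.mp hrmem with hr | hr
        · right; rw [hysph, hr]
        · left; rw [← norm_eq_zero, hysph, Finset.mem_singleton.mp hr, h]
    omega
  · push_neg at hzero
    have hr₁pos : 0 < r₁ := lt_of_le_of_ne hr₁nn (Ne.symm hzero.1)
    have hr₂pos : 0 < r₂ := lt_of_le_of_ne hr₂nn (Ne.symm hzero.2)
    have hsqne : (r₁ : ℂ) ^ 2 ≠ (r₂ : ℂ) ^ 2 := by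
      intro h
      have h' : r₁ ^ 2 = r₂ ^ 2 := by exact_mod_cast h
      rcases lt_trichotomy r₁ r₂ with hlt | heq' | hlt
      · exact absurd h' (ne_of_lt (pow_lt_pow_left₀ hlt hr₁nn two_ne_zero))
      · exact hr12 heq'
      · exact absurd h'.symm (ne_of_lt (pow_lt_pow_left₀ hlt hr₂nn two_ne_zero))
    have hT4 : ∀ k, 1 ≤ k → k ≤ 4 → T₁ k = 0 ∧ T₂ k = 0 := by
      intro k hk hk4
      have e0 := heq 0 k hk (by omega)
      have e1 := heq 1 k hk (by omega)
      rw [pow_zero, pow_zero, one_mul, one_mul] at e0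
      rw [pow_one, pow_one] at e1
      have hprod : ((r₂ : ℂ) ^ 2 - (r₁ : ℂ) ^ 2) * T₂ k = 0 := by
        linear_combination e1 - (r₁ : ℂ) ^ 2 * e0
      have hT2 : T₂ k = 0 := by
        rcases mul_eq_zero.mp hprod with h | h
        · exact absurd (sub_eq_zero.mp h).symm hsqne
        · exact h
      refine ⟨?_, hT2⟩
      linear_combination e0 - hT2
    -- cardinalities
    have hX₁ne : X₁.Nonempty := ⟨x₁, Finset.mem_filter.mpr ⟨hx₁X, hx₁n⟩⟩
    have hX₂ne : X₂.Nonempty := ⟨x₂, Finset.mem_filter.mpr ⟨hx₂X, hx₂n⟩⟩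
    have hcards : X₁.card + X₂.card = 10 := by
      have h1 := hsplit (fun _ => (1 : ℂ))
      simp only [Finset.sum_const, nsmul_eq_mul, mul_one] at h1
      rw [hcard10] at h1
      exact_mod_cast h1.symm
    have h5₁ : 5 ≤ X₁.card := circle_ge_five X₁ r₁ hr₁pos hnormX₁ hX₁ne
      (fun k hk hk4 => (hT4 k hk hk4).1)
    have h5₂ : 5 ≤ X₂.card := circle_ge_five X₂ r₂ hr₂pos hnormX₂ hX₂ne
      (fun k hk hk4 => (hT4 k hk hk4).2)
    have hc₁ : X₁.card = 5 := by omega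
    have hc₂ : X₂.card = 5 := by omega
    have hfive := heq 0 5 (by norm_num) (by norm_num)
    rw [pow_zero, pow_zero, one_mul, one_mul] at hfive
    have n₁ : Complex.normSq (T₁ 5) = 25 * r₁ ^ 10 :=
      circle_five_sum X₁ r₁ hnormX₁ hc₁ (fun k hk hk4 => (hT4 k hk hk4).1)
    have n₂ : Complex.normSq (T₂ 5) = 25 * r₂ ^ 10 :=
      circle_five_sum X₂ r₂ hnormX₂ hc₂ (fun k hk hk4 => (hT4 k hk hk4).2)
    have hT15 : T₁ 5 = - T₂ 5 := by linear_combination hfive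
    rw [hT15, Complex.normSq_neg, n₂] at n₁
    have h10 : r₂ ^ 10 = r₁ ^ 10 := by linarith
    rcases lt_trichotomy r₁ r₂ with hlt | heq' | hlt
    · exact absurd h10.symm (ne_of_lt (pow_lt_pow_left₀ hlt hr₁nn (by norm_num)))
    · exact hr12 heq'
    · exact absurd h10 (ne_of_lt (pow_lt_pow_left₀ hlt hr₂nn (by norm_num)))

end
end

section
/- If (X, w) is a Euclidean 2e-design in ℝⁿ supported by the union S of p concentric spheres, then |X| ≥ dim Pol_e(S). -/
open MeasureTheory Metric Finset
open scoped Classical RealInnerProductSpace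

noncomputable section

open scoped NNReal ENNReal

namespace FisherAux

lemma euc_norm_sq {k : ℕ} (x : Euc k) : ‖x‖ ^ 2 = ∑ i, (x i) ^ 2 := by
  rw [EuclideanSpace.norm_eq, Real.sq_sqrt (by positivity)]
  simp [Real.norm_eq_abs, sq_abs]

lemma euc_dist_sq {k : ℕ} (x y : Euc k) : dist x y ^ 2 = ∑ i, (x i - y i) ^ 2 := by
  rw [EuclideanSpace.dist_eq, Real.sq_sqrt (by positivity)]
  simp [Real.dist_eq, sq_abs]

/-- Delete the `i`-th coordinate. -/
def eucProj {m : ℕ} (i : Fin (m + 1)) (x : Euc (m + 1)) : Euc m :=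
  WithLp.toLp 2 (fun j => x (i.succAbove j))

/-- Insert a value in the `i`-th coordinate. -/
def eucIns {m : ℕ} (i : Fin (m + 1)) (a : ℝ) (x : Euc m) : Euc (m + 1) :=
  WithLp.toLp 2 (i.insertNth (α := fun _ => ℝ) a x.ofLp)

@[simp] lemma eucProj_eucIns {m : ℕ} (i : Fin (m + 1)) (a : ℝ) (x : Euc m) :
    eucProj i (eucIns i a x) = x := by
  ext j
  simp [eucProj, eucIns]

lemma eucIns_self {m : ℕ} (i : Fin (m + 1)) (x : Euc (m + 1)) :
    eucIns i (x i) (eucProj i x) = x :=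
  by
    show WithLp.toLp 2 (i.insertNth (α := fun _ => ℝ) (x i) (i.removeNth x.ofLp)) = x
    rw [Fin.insertNth_self_removeNth]

lemma euc_dist_eucIns_sq {m : ℕ} (i : Fin (m + 1)) (a b : ℝ) (x y : Euc m) :
    dist (eucIns i a x) (eucIns i b y) ^ 2 = (a - b) ^ 2 + dist x y ^ 2 := by
  rw [euc_dist_sq, euc_dist_sq, Fin.sum_univ_succAbove _ i]
  simp [eucIns]

lemma euc_norm_eucIns_sq {m : ℕ} (i : Fin (m + 1)) (a : ℝ) (x : Euc m) :
    ‖eucIns i a x‖ ^ 2 = a ^ 2 + ‖x‖ ^ 2 := by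
  rw [euc_norm_sq, euc_norm_sq, Fin.sum_univ_succAbove _ i]
  simp [eucIns]

lemma euc_norm_eucProj_sq {m : ℕ} (i : Fin (m + 1)) (x : Euc (m + 1)) :
    ‖eucProj i x‖ ^ 2 = ‖x‖ ^ 2 - (x i) ^ 2 := by
  rw [euc_norm_sq, euc_norm_sq, Fin.sum_univ_succAbove _ i]
  simp [eucProj]

lemma lipschitz_eucProj {m : ℕ} (i : Fin (m + 1)) :
    LipschitzWith 1 (eucProj (m := m) i) := by
  refine LipschitzWith.of_dist_le_mul fun x y => ?_
  rw [NNReal.coe_one, one_mul]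
  have h1 : dist (eucProj i x) (eucProj i y) ^ 2 ≤ dist x y ^ 2 := by
    rw [euc_dist_sq, euc_dist_sq, Fin.sum_univ_succAbove _ i]
    have : ∑ j, (eucProj i x j - eucProj i y j) ^ 2
        = ∑ j, (x (i.succAbove j) - y (i.succAbove j)) ^ 2 := rfl
    rw [this]
    nlinarith [sq_nonneg (x i - y i)]
  nlinarith [dist_nonneg (x := eucProj i x) (y := eucProj i y), dist_nonneg (x := x) (y := y)]

lemma le_of_sq_le_sq {a b : ℝ} (ha : 0 ≤ a) (hb : 0 ≤ b) (h : a ^ 2 ≤ b ^ 2) : a ≤ b := by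
  nlinarith

lemma isAddHaar_euc (k : ℕ) :
    (μH[(k : ℝ)] : Measure (Euc k)).IsAddHaarMeasure := by
  have h : ((k : ℝ)) = ((Module.finrank ℝ (Euc k) : ℕ) : ℝ) := by
    simp [finrank_euclideanSpace_fin]
  rw [h]
  infer_instance

lemma big_coord {m : ℕ} {r : ℝ} (hr : 0 < r) {x : Euc (m + 1)} (hx : ‖x‖ = r) :
    ∃ i, r / Real.sqrt (m + 1) ≤ |x i| := by
  obtain ⟨i, -, hi⟩ := Finset.exists_max_image Finset.univ (fun j => |x j|) Finset.univ_nonempty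
  refine ⟨i, ?_⟩
  have hsum : r ^ 2 ≤ (m + 1 : ℝ) * (x i) ^ 2 := by
    have h1 : ∑ j, (x j) ^ 2 ≤ ∑ _j : Fin (m + 1), (x i) ^ 2 := by
      refine Finset.sum_le_sum fun j _ => ?_
      have hj := hi j (Finset.mem_univ j)
      calc (x j) ^ 2 = |x j| ^ 2 := (sq_abs _).symm
        _ ≤ |x i| ^ 2 := by nlinarith [abs_nonneg (x j), abs_nonneg (x i)]
        _ = (x i) ^ 2 := sq_abs _
    have h2 : ‖x‖ ^ 2 = ∑ j, (x j) ^ 2 := euc_norm_sq x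
    rw [hx] at h2
    simp only [Finset.sum_const, Finset.card_univ, Fintype.card_fin, nsmul_eq_mul] at h1
    rw [← h2] at h1
    push_cast at h1 ⊢
    linarith
  refine le_of_sq_le_sq (by positivity) (abs_nonneg _) ?_
  rw [div_pow, Real.sq_sqrt (by positivity), sq_abs, div_le_iff₀ (by positivity)]
  linarith

set_option maxHeartbeats 1000000 in
lemma hausdorff_cap_le {m : ℕ} {r : ℝ} (hr : 0 < r) (i : Fin (m + 1)) {s : ℝ}
    (hs : s = 1 ∨ s = -1) :
    μH[(m : ℝ)] {x : Euc (m + 1) | ‖x‖ = r ∧ r / Real.sqrt (m + 1) ≤ s * x i}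
      ≤ (((m : ℝ≥0) + 2) : ℝ≥0∞) ^ (m : ℝ) * μH[(m : ℝ)] (closedBall (0 : Euc m) r) := by
  set c : ℝ := r / Real.sqrt (m + 1) with hc_def
  have hc : 0 < c := by positivity
  have hs2 : s ^ 2 = 1 := by rcases hs with rfl | rfl <;> norm_num
  have hsabs : |s| = 1 := by rcases hs with rfl | rfl <;> norm_num
  set g : Euc m → ℝ := fun x' => Real.sqrt (r ^ 2 - ‖x'‖ ^ 2) with hg_def
  set D : Set (Euc m) := {x' | ‖x'‖ ≤ r ∧ c ≤ g x'} with hD_def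
  set F : Euc m → Euc (m + 1) := fun x' => eucIns i (s * g x') x' with hF_def
  -- the cap is contained in the image of `D` under `F`
  have hsub : {x : Euc (m + 1) | ‖x‖ = r ∧ c ≤ s * x i} ⊆ F '' D := by
    rintro x ⟨hxr, hxi⟩
    have hxi_pos : 0 < s * x i := lt_of_lt_of_le hc hxi
    have habs : |x i| = s * x i := by
      rw [← abs_of_pos hxi_pos, abs_mul, hsabs, one_mul]
    have hnx' : ‖eucProj i x‖ ^ 2 = r ^ 2 - (x i) ^ 2 := by
      rw [euc_norm_eucProj_sq, hxr]
    have hle : ‖eucProj i x‖ ≤ r := by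
      refine le_of_sq_le_sq (norm_nonneg _) hr.le ?_
      nlinarith [sq_nonneg (x i)]
    have hgx : g (eucProj i x) = |x i| := by
      rw [hg_def]
      simp only
      rw [hnx', show r ^ 2 - (r ^ 2 - (x i) ^ 2) = (x i) ^ 2 by ring, Real.sqrt_sq_eq_abs]
    refine ⟨eucProj i x, ⟨hle, ?_⟩, ?_⟩
    · rw [hgx, habs]; exact hxi
    · rw [hF_def]
      simp only
      rw [hgx, habs, show s * (s * x i) = s ^ 2 * x i by ring, hs2, one_mul]
      exact eucIns_self i x
  have hDsub : D ⊆ closedBall (0 : Euc m) r := fun x' hx' => by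
    rw [mem_closedBall_zero_iff]; exact hx'.1
  -- `F` is Lipschitz on `D`
  have hlip : LipschitzOnWith ((m : ℝ≥0) + 2) F D := by
    rw [lipschitzOnWith_iff_dist_le_mul]
    intro x' hx' y' hy'
    obtain ⟨hxr', hcx⟩ := hx'
    obtain ⟨hyr', hcy⟩ := hy'
    set a := g x' with ha_def
    set b := g y' with hb_def
    have ha2 : a ^ 2 = r ^ 2 - ‖x'‖ ^ 2 := Real.sq_sqrt (by nlinarith [norm_nonneg x'])
    have hb2 : b ^ 2 = r ^ 2 - ‖y'‖ ^ 2 := Real.sq_sqrt (by nlinarith [norm_nonneg y'])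
    have hnd : |‖y'‖ - ‖x'‖| ≤ dist x' y' := by
      rw [dist_comm, dist_eq_norm]
      exact abs_norm_sub_norm_le y' x'
    have key2 : |a ^ 2 - b ^ 2| ≤ dist x' y' * (2 * r) := by
      rw [ha2, hb2,
        show r ^ 2 - ‖x'‖ ^ 2 - (r ^ 2 - ‖y'‖ ^ 2) = (‖y'‖ - ‖x'‖) * (‖y'‖ + ‖x'‖) by ring,
        abs_mul]
      have h1 : |‖y'‖ + ‖x'‖| ≤ 2 * r := by
        rw [abs_of_nonneg (by positivity)]; linarith
      nlinarith [abs_nonneg (‖y'‖ - ‖x'‖), dist_nonneg (x := x') (y := y')]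
    have key1 : |a - b| * (2 * c) ≤ |a ^ 2 - b ^ 2| := by
      rw [show a ^ 2 - b ^ 2 = (a - b) * (a + b) by ring, abs_mul]
      have h2c : 2 * c ≤ |a + b| := by
        rw [abs_of_nonneg (by linarith)]; linarith
      nlinarith [abs_nonneg (a - b)]
    have hrle : r ≤ c * (m + 1 : ℝ) := by
      have hsm : Real.sqrt (m + 1) ≤ (m + 1 : ℝ) := by
        nlinarith [Real.sq_sqrt (show (0:ℝ) ≤ (m+1:ℝ) by positivity),
          Real.sqrt_nonneg ((m+1 : ℝ))]
      have hceq : c * Real.sqrt (m + 1) = r := by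
        rw [hc_def]; field_simp
      calc r = c * Real.sqrt (m + 1) := hceq.symm
        _ ≤ c * (m + 1 : ℝ) := mul_le_mul_of_nonneg_left hsm hc.le
    have hab : |a - b| ≤ (m + 1 : ℝ) * dist x' y' := by
      have h4 : dist x' y' * (2 * r) ≤ ((m + 1 : ℝ) * dist x' y') * (2 * c) := by
        have : dist x' y' * (2 * r) ≤ dist x' y' * (2 * (c * (m + 1 : ℝ))) :=
          mul_le_mul_of_nonneg_left (by linarith) dist_nonneg
        calc dist x' y' * (2 * r) ≤ dist x' y' * (2 * (c * (m + 1 : ℝ))) := this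
          _ = ((m + 1 : ℝ) * dist x' y') * (2 * c) := by ring
      exact le_of_mul_le_mul_right ((key1.trans key2).trans h4) (by linarith)
    have hd2 : dist (F x') (F y') ^ 2 = (s * a - s * b) ^ 2 + dist x' y' ^ 2 :=
      euc_dist_eucIns_sq i (s * a) (s * b) x' y'
    have hcoe : (((m : ℝ≥0) + 2 : ℝ≥0) : ℝ) = (m : ℝ) + 2 := by push_cast; ring
    rw [hcoe]
    refine le_of_sq_le_sq dist_nonneg (by positivity) ?_
    have hsq : (s * a - s * b) ^ 2 = (a - b) ^ 2 := by
      rw [show s * a - s * b = s * (a - b) by ring, mul_pow, hs2, one_mul]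
    rw [hd2, hsq]
    have h5 : (a - b) ^ 2 ≤ ((m + 1 : ℝ) * dist x' y') ^ 2 := by
      rw [← sq_abs]
      exact pow_le_pow_left₀ (abs_nonneg _) hab 2
    nlinarith [sq_nonneg (dist x' y'), dist_nonneg (x := x') (y := y'),
      Nat.cast_nonneg (α := ℝ) m]
  calc μH[(m : ℝ)] {x : Euc (m + 1) | ‖x‖ = r ∧ c ≤ s * x i}
      ≤ μH[(m : ℝ)] (F '' D) := measure_mono hsub
    _ ≤ (((m : ℝ≥0) + 2) : ℝ≥0∞) ^ (m : ℝ) * μH[(m : ℝ)] D :=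
        hlip.hausdorffMeasure_image_le (by positivity)
    _ ≤ (((m : ℝ≥0) + 2) : ℝ≥0∞) ^ (m : ℝ) * μH[(m : ℝ)] (closedBall (0 : Euc m) r) := by
        gcongr

lemma sphere_hausdorff_lt_top {m : ℕ} {r : ℝ} (hr : 0 < r) :
    μH[(m : ℝ)] (sphere (0 : Euc (m + 1)) r) < ⊤ := by
  haveI := isAddHaar_euc m
  set c : ℝ := r / Real.sqrt (m + 1) with hc_def
  have cover : sphere (0 : Euc (m + 1)) r ⊆ ⋃ i : Fin (m + 1),
      ({x : Euc (m + 1) | ‖x‖ = r ∧ c ≤ 1 * x i} ∪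
        {x : Euc (m + 1) | ‖x‖ = r ∧ c ≤ (-1) * x i}) := by
    intro x hx
    have hxr : ‖x‖ = r := mem_sphere_zero_iff_norm.1 hx
    obtain ⟨i, hi⟩ := big_coord hr hxr
    refine Set.mem_iUnion.2 ⟨i, ?_⟩
    rcases abs_cases (x i) with ⟨h1, _⟩ | ⟨h1, _⟩
    · exact Or.inl ⟨hxr, by rw [one_mul, ← h1]; exact hi⟩
    · exact Or.inr ⟨hxr, by rw [neg_one_mul, ← h1]; exact hi⟩
  have hB : (((m : ℝ≥0) + 2) : ℝ≥0∞) ^ (m : ℝ) * μH[(m : ℝ)] (closedBall (0 : Euc m) r) < ⊤ := by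
    refine ENNReal.mul_lt_top ?_ ((isCompact_closedBall _ _).measure_lt_top)
    exact ENNReal.rpow_lt_top_of_nonneg (by positivity) (by simp)
  refine lt_of_le_of_lt ((measure_mono cover).trans (measure_iUnion_le _)) ?_
  rw [tsum_fintype]
  refine ENNReal.sum_lt_top.2 fun i _ => ?_
  refine lt_of_le_of_lt (measure_union_le _ _) (ENNReal.add_lt_top.2 ⟨?_, ?_⟩)
  · exact lt_of_le_of_lt (hausdorff_cap_le hr i (Or.inl rfl)) hB
  · exact lt_of_le_of_lt (hausdorff_cap_le hr i (Or.inr rfl)) hB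

lemma eq_of_sq_eq {a b : ℝ} (ha : 0 ≤ a) (hb : 0 ≤ b) (h : a ^ 2 = b ^ 2) : a = b := by
  nlinarith

set_option maxHeartbeats 800000 in
lemma sphere_inter_open_pos {m : ℕ} {r : ℝ} (hr : 0 < r) {V : Set (Euc (m + 1))}
    (hV : IsOpen V) {y : Euc (m + 1)} (hy : ‖y‖ = r) (hyV : y ∈ V) :
    0 < μH[(m : ℝ)] (V ∩ sphere (0 : Euc (m + 1)) r) := by
  haveI := isAddHaar_euc m
  obtain ⟨i, hci⟩ := big_coord hr hy
  have hc : 0 < r / Real.sqrt (m + 1) := by positivity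
  have hyi : 0 < |y i| := lt_of_lt_of_le hc hci
  set s : ℝ := if 0 ≤ y i then 1 else -1 with hs_def
  have habs : s * y i = |y i| := by
    rw [hs_def]
    rcases le_or_gt 0 (y i) with h | h
    · rw [if_pos h, one_mul, abs_of_nonneg h]
    · rw [if_neg (not_le.2 h), abs_of_neg h, neg_one_mul]
  have hs2 : s ^ 2 = 1 := by
    rw [hs_def]; split <;> norm_num
  set g : Euc m → ℝ := fun x' => Real.sqrt (r ^ 2 - ‖x'‖ ^ 2) with hg_def
  have hgcont : Continuous g := by
    rw [hg_def]
    exact Real.continuous_sqrt.comp (continuous_const.sub (continuous_norm.pow 2))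
  set y' : Euc m := eucProj i y with hy'_def
  have hny' : ‖y'‖ ^ 2 = r ^ 2 - (y i) ^ 2 := by
    rw [hy'_def, euc_norm_eucProj_sq, hy]
  have hy'lt : ‖y'‖ < r := by
    nlinarith [norm_nonneg y', sq_abs (y i)]
  have hgy' : g y' = |y i| := by
    rw [hg_def]
    simp only
    rw [hny', show r ^ 2 - (r ^ 2 - (y i) ^ 2) = (y i) ^ 2 by ring, Real.sqrt_sq_eq_abs]
  set G : Euc m → Euc (m + 1) := fun x' => eucIns i (s * g x') x' with hG_def
  have hGy' : G y' = y := by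
    rw [hG_def]
    simp only
    rw [hgy', ← habs, show s * (s * y i) = s ^ 2 * y i by ring, hs2, one_mul, hy'_def]
    exact eucIns_self i y
  obtain ⟨ε, hε, hball⟩ := Metric.isOpen_iff.1 hV y hyV
  set W : Set (Euc m) :=
    {x' | |g x' - g y'| + dist x' y' < ε} ∩ ball (0 : Euc m) r with hW_def
  have hWopen : IsOpen W := by
    refine IsOpen.inter ?_ isOpen_ball
    have hcont : Continuous fun x' : Euc m => |g x' - g y'| + dist x' y' :=
      ((hgcont.sub continuous_const).abs.add (continuous_id.dist continuous_const))
    exact isOpen_lt hcont continuous_const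
  have hy'W : y' ∈ W := by
    constructor
    · simp [hε]
    · rw [mem_ball_zero_iff]; exact hy'lt
  have hWsub : W ⊆ eucProj i '' (V ∩ sphere (0 : Euc (m + 1)) r) := by
    rintro x' ⟨h1, h2⟩
    rw [mem_ball_zero_iff] at h2
    simp only [Set.mem_setOf_eq] at h1
    have hgx_sq : (g x') ^ 2 = r ^ 2 - ‖x'‖ ^ 2 := by
      rw [hg_def]
      exact Real.sq_sqrt (by nlinarith [norm_nonneg x'])
    have hGsph : ‖G x'‖ = r := by
      refine eq_of_sq_eq (norm_nonneg _) hr.le ?_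
      rw [hG_def]
      simp only
      rw [euc_norm_eucIns_sq, mul_pow, hs2, one_mul, hgx_sq]
      ring
    have hGV : G x' ∈ V := by
      refine hball ?_
      rw [mem_ball, ← hGy']
      have hd2 : dist (G x') (G y') ^ 2 = (s * g x' - s * g y') ^ 2 + dist x' y' ^ 2 :=
        euc_dist_eucIns_sq i (s * g x') (s * g y') x' y'
      have hsq : (s * g x' - s * g y') ^ 2 = (g x' - g y') ^ 2 := by
        rw [show s * g x' - s * g y' = s * (g x' - g y') by ring, mul_pow, hs2, one_mul]
      have hA : (g x' - g y') ^ 2 + dist x' y' ^ 2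
          ≤ (|g x' - g y'| + dist x' y') ^ 2 := by
        nlinarith [sq_abs (g x' - g y'),
          mul_nonneg (abs_nonneg (g x' - g y')) (dist_nonneg (x := x') (y := y'))]
      have hB : (|g x' - g y'| + dist x' y') ^ 2 < ε ^ 2 :=
        pow_lt_pow_left₀ h1 (by positivity) (two_ne_zero)
      have hlt : dist (G x') (G y') ^ 2 < ε ^ 2 := by
        rw [hd2, hsq]; exact lt_of_le_of_lt hA hB
      exact lt_of_pow_lt_pow_left₀ 2 hε.le hlt
    exact ⟨G x', ⟨hGV, mem_sphere_zero_iff_norm.2 hGsph⟩, eucProj_eucIns _ _ _⟩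
  have hWpos : 0 < μH[(m : ℝ)] W := hWopen.measure_pos _ ⟨y', hy'W⟩
  have hchain : μH[(m : ℝ)] W ≤ μH[(m : ℝ)] (V ∩ sphere (0 : Euc (m + 1)) r) := by
    calc μH[(m : ℝ)] W ≤ μH[(m : ℝ)] (eucProj i '' (V ∩ sphere (0 : Euc (m + 1)) r)) :=
          measure_mono hWsub
      _ ≤ (1 : ℝ≥0∞) ^ (m : ℝ) * μH[(m : ℝ)] (V ∩ sphere (0 : Euc (m + 1)) r) := by
          simpa using (lipschitz_eucProj i).hausdorffMeasure_image_le (by positivity)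
            (V ∩ sphere (0 : Euc (m + 1)) r)
      _ = μH[(m : ℝ)] (V ∩ sphere (0 : Euc (m + 1)) r) := by
          rw [ENNReal.one_rpow, one_mul]
  exact lt_of_lt_of_le hWpos hchain

lemma eval_zero_of_avg_zero {m : ℕ} {r : ℝ} (hr : 0 < r) {f : Euc (m + 1) → ℝ}
    (hf : Continuous f) (hnn : ∀ x, 0 ≤ f x)
    (havg : ⨍ x in sphere (0 : Euc (m + 1)) r, f x ∂(μH[((m + 1 : ℕ) : ℝ) - 1]) = 0)
    {y : Euc (m + 1)} (hy : ‖y‖ = r) : f y = 0 := by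
  have hexp : ((m + 1 : ℕ) : ℝ) - 1 = (m : ℝ) := by push_cast; ring
  rw [hexp] at havg
  set μ := (μH[(m : ℝ)] : Measure (Euc (m + 1))).restrict (sphere (0 : Euc (m + 1)) r) with hμ
  have hSmeas : MeasurableSet (sphere (0 : Euc (m + 1)) r) := Metric.isClosed_sphere.measurableSet
  have hpos : 0 < μH[(m : ℝ)] (sphere (0 : Euc (m + 1)) r) := by
    have := sphere_inter_open_pos (V := Set.univ) hr isOpen_univ hy (Set.mem_univ y)
    simpa using this
  have hfin := sphere_hausdorff_lt_top (m := m) hr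
  haveI : IsFiniteMeasure μ := ⟨by rw [hμ, Measure.restrict_apply_univ]; exact hfin⟩
  have hint : Integrable f μ := by
    obtain ⟨C, hC⟩ := (isCompact_sphere (0 : Euc (m + 1)) r).exists_bound_of_continuousOn
      hf.continuousOn
    refine Integrable.mono' (integrable_const C) hf.aestronglyMeasurable ?_
    rw [hμ]
    exact (ae_restrict_iff' hSmeas).2 (Filter.Eventually.of_forall hC)
  have hI : ∫ x, f x ∂μ = 0 := by
    rw [setAverage_eq] at havg
    have ht : (μH[(m : ℝ)] (sphere (0 : Euc (m + 1)) r)).toReal ≠ 0 :=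
      (ENNReal.toReal_pos hpos.ne' hfin.ne).ne'
    rcases smul_eq_zero.1 havg with h | h
    · exact absurd (inv_eq_zero.1 h) ht
    · exact h
  have hae : f =ᵐ[μ] 0 := (integral_eq_zero_iff_of_nonneg hnn hint).1 hI
  by_contra hfy
  have hfy' : 0 < f y := lt_of_le_of_ne (hnn y) (Ne.symm hfy)
  have hopen : IsOpen (f ⁻¹' Set.Ioi 0) := isOpen_Ioi.preimage hf
  have h0 : μ (f ⁻¹' Set.Ioi 0) = 0 := by
    have h1 := hae
    rw [Filter.EventuallyEq, ae_iff] at h1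
    refine measure_mono_null ?_ h1
    intro x hx
    simp only [Set.mem_preimage, Set.mem_Ioi] at hx
    simpa using (ne_of_gt hx)
  rw [hμ, Measure.restrict_apply hopen.measurableSet] at h0
  exact absurd h0 (sphere_inter_open_pos hr hopen hy hfy').ne'

end FisherAux

open FisherAux

/-- Fisher-type inequality: if `(X, w)` is a Euclidean `2e`-design in `ℝⁿ`
supported by the union `S` of its concentric spheres, then `|X| ≥ dim Pol_e(S)`. -/
theorem card_ge_dim_polOn_of_euclidean_design (n e : ℕ)
    (X : Finset (Euc n)) (w : Euc n → ℝ)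
    (hne : X.Nonempty) (hw : ∀ x ∈ X, 0 < w x)
    (hd : IsEuclideanDesign n (2 * e) X w) :
    dimPolOn n e (suppSpheres n X) ≤ X.card := by
  -- continuity of polynomial evaluation
  have hcont : ∀ (q : MvPolynomial (Fin n) ℝ), Continuous fun z : Euc n => evalPt z q := by
    intro q
    have h1 : Continuous fun z : Euc n => (fun i => z i : Fin n → ℝ) :=
      PiLp.continuous_ofLp 2 (fun _ : Fin n => ℝ)
    exact (MvPolynomial.continuous_eval q).comp h1
  -- key vanishing property
  have main : ∀ p : MvPolynomial (Fin n) ℝ, p.totalDegree ≤ e →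
      (∀ x ∈ X, evalPt x p = 0) → ∀ y ∈ suppSpheres n X, evalPt y p = 0 := by
    intro p hdeg hvan
    have hsqdeg : (p * p).totalDegree ≤ 2 * e :=
      le_trans (MvPolynomial.totalDegree_mul p p) (by omega)
    have hd2 := hd (p * p) hsqdeg
    have hmul : ∀ z : Euc n, evalPt z (p * p) = evalPt z p * evalPt z p := by
      intro z; simp [evalPt]
    have hRHS : ∑ x ∈ X, w x * evalPt x (p * p) = 0 := by
      refine Finset.sum_eq_zero fun x hx => ?_
      rw [hmul, hvan x hx, mul_zero, mul_zero]
    rw [hRHS] at hd2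
    -- nonnegativity of each term in the LHS
    have havg_nonneg : ∀ r : ℝ, 0 ≤ sphAvg n r (fun y => evalPt y (p * p)) := by
      intro r
      unfold sphAvg
      split
      · show 0 ≤ evalPt (0 : Euc n) (p * p)
        rw [hmul]; exact mul_self_nonneg _
      · rw [setAverage_eq]
        refine smul_nonneg (by positivity) ?_
        refine integral_nonneg fun z => ?_
        show 0 ≤ evalPt z (p * p)
        rw [hmul]; exact mul_self_nonneg _
    have hwpos : ∀ r ∈ X.image (fun x => ‖x‖),
        0 < ∑ x ∈ X.filter (fun x => ‖x‖ = r), w x := by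
      intro r hr
      obtain ⟨x, hxX, hxr⟩ := Finset.mem_image.1 hr
      refine Finset.sum_pos (fun z hz => hw z (Finset.mem_filter.1 hz).1)
        ⟨x, Finset.mem_filter.2 ⟨hxX, hxr⟩⟩
    have hterm : ∀ r ∈ X.image (fun x => ‖x‖),
        sphAvg n r (fun y => evalPt y (p * p)) = 0 := by
      intro r hr
      have hz := (Finset.sum_eq_zero_iff_of_nonneg
        (fun r hr => mul_nonneg (hwpos r hr).le (havg_nonneg r))).1 hd2 r hr
      exact (mul_eq_zero.1 hz).resolve_left (hwpos r hr).ne'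
    intro y hy
    rw [suppSpheres] at hy
    obtain ⟨r, hrmem, hysph⟩ := Set.mem_iUnion₂.1 hy
    have hyr : ‖y‖ = r := mem_sphere_zero_iff_norm.1 hysph
    rcases eq_or_ne r 0 with rfl | hr0
    · have hy0 : y = 0 := norm_eq_zero.1 hyr
      have h0 := hterm 0 hrmem
      rw [sphAvg, if_pos rfl, hmul] at h0
      rw [hy0]
      exact mul_self_eq_zero.1 h0
    · have hrpos : 0 < r := by
        obtain ⟨x, _, hxr⟩ := Finset.mem_image.1 hrmem
        have := norm_nonneg x
        rw [hxr] at this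
        exact lt_of_le_of_ne this (Ne.symm hr0)
      rcases n with _ | m
      · exfalso
        have h00 : ‖y‖ ^ 2 = ∑ i : Fin 0, (y i) ^ 2 := euc_norm_sq y
        have h01 : ‖y‖ ^ 2 = 0 := by simpa using h00
        have h02 : ‖y‖ = 0 := by nlinarith [norm_nonneg y]
        rw [h02] at hyr
        exact hrpos.ne hyr
      · have h0 := hterm r hrmem
        rw [sphAvg, if_neg hr0] at h0
        have hexp : ((m + 1 : ℕ) : ℝ) - 1 = ((m + 1 : ℕ) : ℝ) - 1 := rfl
        have hres := eval_zero_of_avg_zero hrpos (hcont (p * p))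
          (fun z => by rw [hmul]; exact mul_self_nonneg _) (by exact_mod_cast h0) hyr
        rw [hmul] at hres
        exact mul_self_eq_zero.1 hres
  -- linear algebra
  have hXS : ∀ x ∈ X, x ∈ suppSpheres n X := by
    intro x hx
    rw [suppSpheres]
    exact Set.mem_biUnion (Finset.mem_image_of_mem _ hx) (mem_sphere_zero_iff_norm.2 rfl)
  set S := suppSpheres n X with hS_def
  let R : ((↥S) → ℝ) →ₗ[ℝ] ({x // x ∈ X} → ℝ) :=
    { toFun := fun g x => g ⟨(x : Euc n), hXS x x.2⟩
      map_add' := fun g h => rfl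
      map_smul' := fun c g => rfl }
  let L : (PolOn n e S) →ₗ[ℝ] ({x // x ∈ X} → ℝ) := R.comp (PolOn n e S).subtype
  have hLinj : Function.Injective L := by
    rw [injective_iff_map_eq_zero]
    intro g hg
    obtain ⟨gval, hgmem⟩ := g
    obtain ⟨p, hp, hpg⟩ := hgmem
    have hp' : p ∈ MvPolynomial.restrictTotalDegree (Fin n) ℝ e := hp
    have hpdeg : p.totalDegree ≤ e := (MvPolynomial.mem_restrictTotalDegree (σ := Fin n) (R := ℝ) (m := e) p).1 hp'
    have hvan : ∀ x ∈ X, evalPt x p = 0 := by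
      intro x hx
      have h1 := congrFun hg (⟨x, hx⟩ : {x // x ∈ X})
      have h2 : gval ⟨x, hXS x hx⟩ = evalPt x p := by
        rw [← hpg]; rfl
      rw [← h2]
      simpa [L, R] using h1
    have hzero : ∀ y ∈ S, evalPt y p = 0 := main p hpdeg hvan
    refine Subtype.ext ?_
    show gval = 0
    funext z
    have h3 : gval z = evalPt (z : Euc n) p := by rw [← hpg]; rfl
    rw [Pi.zero_apply, h3]
    exact hzero (z : Euc n) z.2
  have hfin : Module.finrank ℝ (PolOn n e S) ≤ Module.finrank ℝ ({x // x ∈ X} → ℝ) :=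
    LinearMap.finrank_le_finrank_of_injective hLinj
  rw [dimPolOn]
  calc Module.finrank ℝ (PolOn n e S) ≤ Module.finrank ℝ ({x // x ∈ X} → ℝ) := hfin
    _ = Fintype.card {x // x ∈ X} := Module.finrank_pi ℝ
    _ = X.card := Fintype.card_coe X

end
end

section
/- Let S = S_1 ∪ … ∪ S_p be a union of p concentric spheres in ℝⁿ centered at the origin with distinct radii r_1,…,r_p ≥ 0, let ε_S = 1 if 0 ∈ S and ε_S = 0 otherwise, and let Pol_e(S) be the space of restrictions to S of polynomials of degree at most e. (a) If p ≤ ⌊(e+ε_S)/2⌋, then dim Pol_e(S) = ε_S + Σ_{i=0}^{2(p−ε_S)−1} C(n+e−i−1, n−1), and this is strictly less than C(n+e, e). (b) If p ≥ ⌊(e+ε_S)/2⌋ + 1, then dim Pol_e(S) = C(n+e, e). -/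
open MeasureTheory Metric Finset
open scoped Classical RealInnerProductSpace

noncomputable section

-- ==================== auxiliary lemmas ====================
section Aux
open MvPolynomial Polynomial

lemma eval_zero_of_open : ∀ {n : ℕ} (f : MvPolynomial (Fin n) ℝ) (U : Set (Fin n → ℝ)),
    IsOpen U → U.Nonempty → (∀ x ∈ U, eval x f = 0) → f = 0 := by
  intro n
  induction n with
  | zero =>
    intro f U _ hne h
    obtain ⟨x₀, hx₀⟩ := hne
    exact MvPolynomial.funext (q := 0) fun x => by
      rw [Subsingleton.elim x x₀]; simpa using h x₀ hx₀
  | succ n ih =>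
    intro f U hU hne h
    obtain ⟨x₀, hx₀⟩ := hne
    have hcont : Continuous (fun p : ℝ × (Fin n → ℝ) => (Fin.cons p.1 p.2 : Fin (n+1) → ℝ)) := by
      apply continuous_pi
      intro i
      refine Fin.cases ?_ ?_ i
      · simpa using continuous_fst
      · intro j; simp; exact (continuous_apply j).comp continuous_snd
    have hpre : IsOpen ((fun p : ℝ × (Fin n → ℝ) => (Fin.cons p.1 p.2 : Fin (n+1) → ℝ)) ⁻¹' U) :=
      hU.preimage hcont
    have hmem : (x₀ 0, Fin.tail x₀) ∈ ((fun p : ℝ × (Fin n → ℝ) => (Fin.cons p.1 p.2 : Fin (n+1) → ℝ)) ⁻¹' U) := by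
      simp only [Set.mem_preimage, Fin.cons_self_tail]; exact hx₀
    rw [Metric.isOpen_iff] at hpre
    obtain ⟨δ, hδ, hball⟩ := hpre _ hmem
    -- ball in product: contains ball × ball
    have key : ∀ y ∈ Metric.ball (Fin.tail x₀) δ, ∀ t ∈ Metric.ball (x₀ 0) δ,
        (Fin.cons t y : Fin (n+1) → ℝ) ∈ U := by
      intro y hy t ht
      have : ((t, y) : ℝ × (Fin n → ℝ)) ∈ Metric.ball (x₀ 0, Fin.tail x₀) δ := by
        rw [Metric.mem_ball, Prod.dist_eq]
        exact max_lt ht hy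
      exact hball this
    have hcoeff : ∀ k, (MvPolynomial.finSuccEquiv ℝ n f).coeff k = 0 := by
      intro k
      apply ih _ (Metric.ball (Fin.tail x₀) δ) Metric.isOpen_ball
        ⟨_, Metric.mem_ball_self hδ⟩
      intro y hy
      have hpoly : Polynomial.map (eval y) (MvPolynomial.finSuccEquiv ℝ n f) = 0 := by
        apply Polynomial.eq_zero_of_infinite_isRoot
        apply Set.Infinite.mono (s := Metric.ball (x₀ 0) δ)
        · intro t ht
          simp only [Set.mem_setOf_eq, Polynomial.IsRoot]
          rw [← MvPolynomial.eval_eq_eval_mv_eval']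
          exact h _ (key y hy t ht)
        · rw [Real.ball_eq_Ioo]; exact Set.Ioo_infinite (by linarith)
      have := congrArg (fun q => Polynomial.coeff q k) hpoly
      simpa [Polynomial.coeff_map] using this
    have : MvPolynomial.finSuccEquiv ℝ n f = 0 := Polynomial.ext fun k => by simp [hcoeff k]
    have h2 := congrArg (MvPolynomial.finSuccEquiv ℝ n).symm this
    simpa using h2

noncomputable def sphPoly (n : ℕ) (r : ℝ) : MvPolynomial (Fin n) ℝ :=
  (∑ i, MvPolynomial.X i ^ 2) - MvPolynomial.C (r ^ 2)

lemma finSuccEquiv_C' {m : ℕ} (a : ℝ) :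
    MvPolynomial.finSuccEquiv ℝ m (MvPolynomial.C a) = Polynomial.C (MvPolynomial.C a) := by
  have h : (MvPolynomial.finSuccEquiv ℝ m).symm (Polynomial.C (MvPolynomial.C a))
      = MvPolynomial.C a := by
    have := congrFun (congrArg (fun f => f.toFun) (MvPolynomial.finSuccEquiv_comp_C_eq_C m (R := ℝ))) a
    simpa using this
  rw [← h]; simp

lemma dvd_of_vanish_sphere {n : ℕ} (hn : 1 ≤ n) (r : ℝ) (hr : 0 < r)
    (f : MvPolynomial (Fin n) ℝ)
    (h : ∀ x : Fin n → ℝ, ∑ i, x i ^ 2 = r ^ 2 → MvPolynomial.eval x f = 0) :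
    sphPoly n r ∣ f := by
  obtain ⟨m, rfl⟩ : ∃ m, n = m + 1 := ⟨n - 1, (Nat.succ_pred_eq_of_pos hn).symm⟩
  set E := MvPolynomial.finSuccEquiv ℝ m with hE
  set c : MvPolynomial (Fin m) ℝ := (∑ i, MvPolynomial.X i ^ 2) - MvPolynomial.C (r ^ 2) with hc
  set G : Polynomial (MvPolynomial (Fin m) ℝ) := Polynomial.X ^ 2 + Polynomial.C c with hG
  have hEg : E (sphPoly (m+1) r) = G := by
    rw [sphPoly, map_sub, map_sum, Fin.sum_univ_succ]
    simp only [map_pow, hE, MvPolynomial.finSuccEquiv_X_zero, MvPolynomial.finSuccEquiv_X_succ,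
      finSuccEquiv_C']
    rw [hG, hc]
    rw [map_sub, map_sum]
    simp only [map_pow]
    ring
  have hmonic : G.Monic := by
    apply Polynomial.monic_X_pow_add
    exact (Polynomial.degree_C_le).trans_lt (by norm_num)
  have hdegG : G.degree = 2 := by
    rw [hG]; exact Polynomial.degree_X_pow_add_C (by norm_num) c
  set rem := (E f) %ₘ G with hrem
  have hdeg : rem.degree ≤ 1 := by
    have := Polynomial.degree_modByMonic_lt (E f) hmonic
    rw [hdegG] at this
    exact Order.le_of_lt_succ (by exact_mod_cast this)
  have hmapG : ∀ y : Fin m → ℝ, Polynomial.map (MvPolynomial.eval y) G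
      = Polynomial.X ^ 2 + Polynomial.C ((∑ i, y i ^ 2) - r ^ 2) := by
    intro y
    rw [hG, Polynomial.map_add, Polynomial.map_pow, Polynomial.map_X, Polynomial.map_C, hc]
    congr 1
    rw [map_sub, map_sum]
    simp
  have hball : ∀ y : Fin m → ℝ, (∑ i, y i ^ 2) < r ^ 2 →
      MvPolynomial.eval y (rem.coeff 1) = 0 ∧ MvPolynomial.eval y (rem.coeff 0) = 0 := by
    intro y hy
    set t : ℝ := Real.sqrt (r ^ 2 - ∑ i, y i ^ 2) with ht
    have ht2 : t ^ 2 = r ^ 2 - ∑ i, y i ^ 2 := Real.sq_sqrt (by linarith)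
    have htpos : 0 < t := Real.sqrt_pos.mpr (by linarith)
    have key : ∀ s : ℝ, s ^ 2 = r ^ 2 - ∑ i, y i ^ 2 →
        MvPolynomial.eval y (rem.coeff 1) * s + MvPolynomial.eval y (rem.coeff 0) = 0 := by
      intro s hs
      have hsph : ∑ i, (Fin.cons s y : Fin (m+1) → ℝ) i ^ 2 = r ^ 2 := by
        rw [Fin.sum_univ_succ]
        simp only [Fin.cons_zero, Fin.cons_succ]
        linarith
      have h0 := h _ hsph
      rw [MvPolynomial.eval_eq_eval_mv_eval', ← hE] at h0
      have hEf : E f = rem + G * (E f /ₘ G) := (Polynomial.modByMonic_add_div (E f) G).symm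
      rw [hEf, Polynomial.map_add, Polynomial.map_mul, Polynomial.eval_add,
        Polynomial.eval_mul, hmapG y] at h0
      have hGeval : Polynomial.eval s (Polynomial.X ^ 2
          + Polynomial.C ((∑ i, y i ^ 2) - r ^ 2)) = (0:ℝ) := by
        simp only [Polynomial.eval_add, Polynomial.eval_pow, Polynomial.eval_X, Polynomial.eval_C]
        linarith
      rw [hGeval, zero_mul, add_zero] at h0
      have hremC : rem = Polynomial.C (rem.coeff 1) * Polynomial.X + Polynomial.C (rem.coeff 0) :=
        Polynomial.eq_X_add_C_of_degree_le_one hdeg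
      rw [hremC] at h0
      simpa using h0
    have h1 := key t ht2
    have h2 := key (-t) (by rw [neg_pow]; simpa using ht2)
    constructor
    · have h3 : MvPolynomial.eval y (rem.coeff 1) * (2 * t) = 0 := by linarith
      rcases mul_eq_zero.mp h3 with h' | h'
      · exact h'
      · exfalso; nlinarith
    · linarith
  have hopen : IsOpen {y : Fin m → ℝ | (∑ i, y i ^ 2) < r ^ 2} := by
    have hco : Continuous fun y : Fin m → ℝ => ∑ i, y i ^ 2 :=
      continuous_finset_sum _ fun i _ => (continuous_apply i).pow 2
    exact isOpen_lt hco continuous_const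
  have hnon : {y : Fin m → ℝ | (∑ i, y i ^ 2) < r ^ 2}.Nonempty :=
    ⟨0, by simp only [Set.mem_setOf_eq, Pi.zero_apply]; rw [Finset.sum_eq_zero (by simp)]; positivity⟩
  have ha : rem.coeff 1 = 0 :=
    eval_zero_of_open _ _ hopen hnon fun y hy => (hball y hy).1
  have hb : rem.coeff 0 = 0 :=
    eval_zero_of_open _ _ hopen hnon fun y hy => (hball y hy).2
  have hrem0 : rem = 0 := by
    rw [Polynomial.eq_X_add_C_of_degree_le_one hdeg, ha, hb]
    simp
  have hGdvd : G ∣ E f := (Polynomial.modByMonic_eq_zero_iff_dvd hmonic).mp hrem0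
  obtain ⟨q, hq⟩ := hGdvd
  refine ⟨E.symm q, ?_⟩
  have h5 : E f = E (sphPoly (m+1) r) * q := by rw [hq, hEg]
  calc f = E.symm (E f) := by simp
    _ = E.symm (E (sphPoly (m+1) r) * q) := by rw [h5]
    _ = sphPoly (m+1) r * E.symm q := by rw [map_mul]; simp

lemma sqSum_isHomogeneous (n : ℕ) :
    (∑ i : Fin n, MvPolynomial.X i ^ 2 : MvPolynomial (Fin n) ℝ).IsHomogeneous 2 :=
  IsHomogeneous.sum _ _ _ (fun i _ => (isHomogeneous_X ℝ i).pow 2)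

lemma sqSum_ne_zero {n : ℕ} (hn : 1 ≤ n) :
    (∑ i : Fin n, MvPolynomial.X i ^ 2 : MvPolynomial (Fin n) ℝ) ≠ 0 := by
  intro h
  have := congrArg (MvPolynomial.eval (fun _ => (1:ℝ))) h
  simp at this
  omega

lemma homogeneousComponent_totalDegree_ne_zero {n : ℕ}
    {q : MvPolynomial (Fin n) ℝ} (hq : q ≠ 0) :
    homogeneousComponent q.totalDegree q ≠ 0 := by
  have hsupp : q.support.Nonempty := support_nonempty.mpr hq
  obtain ⟨b, hb, hbs⟩ := Finset.exists_mem_eq_sup _ hsupp (fun m => m.sum fun _ e => e)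
  intro h0
  have this2 := coeff_homogeneousComponent q.totalDegree q b
  rw [h0] at this2
  simp only [MvPolynomial.coeff_zero] at this2
  rw [if_pos] at this2
  · exact (mem_support_iff.mp hb) this2.symm
  · rw [totalDegree, hbs]
    simp [Finsupp.degree, Finsupp.sum]
    rfl
lemma totalDegree_add_two_le {n : ℕ} (hn : 1 ≤ n) (r : ℝ)
    {q : MvPolynomial (Fin n) ℝ} (hq : q ≠ 0) :
    q.totalDegree + 2 ≤ (sphPoly n r * q).totalDegree := by
  set d := q.totalDegree with hd
  set s : MvPolynomial (Fin n) ℝ := ∑ i, MvPolynomial.X i ^ 2 with hs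
  have hcomp : homogeneousComponent (d + 2) (sphPoly n r * q)
      = s * homogeneousComponent d q := by
    have h1 : sphPoly n r * q = s * q - MvPolynomial.C (r ^ 2) * q := by
      rw [sphPoly]; ring
    rw [h1, map_sub]
    have h2 : homogeneousComponent (d + 2) (MvPolynomial.C (r ^ 2) * q) = 0 := by
      apply homogeneousComponent_eq_zero
      calc (MvPolynomial.C (r ^ 2) * q).totalDegree
          ≤ (MvPolynomial.C (r ^ 2) : MvPolynomial (Fin n) ℝ).totalDegree + q.totalDegree :=
            totalDegree_mul _ _
        _ < d + 2 := by rw [totalDegree_C]; omega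
    rw [h2, sub_zero]
    conv_lhs => rw [← sum_homogeneousComponent q, Finset.mul_sum, map_sum]
    rw [Finset.sum_eq_single d]
    · rw [homogeneousComponent_of_mem ((mem_homogeneousSubmodule _ _).mpr
        (((sqSum_isHomogeneous n).mul (homogeneousComponent_isHomogeneous d q))))]
      rw [if_pos (by omega)]
    · intro j hj hjd
      rw [homogeneousComponent_of_mem ((mem_homogeneousSubmodule _ _).mpr
        (((sqSum_isHomogeneous n).mul (homogeneousComponent_isHomogeneous j q))))]
      rw [if_neg (by omega)]
    · intro hd2
      exact absurd (Finset.self_mem_range_succ q.totalDegree) hd2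
  have hne : homogeneousComponent (d + 2) (sphPoly n r * q) ≠ 0 := by
    rw [hcomp]
    exact mul_ne_zero (sqSum_ne_zero hn) (homogeneousComponent_totalDegree_ne_zero hq)
  by_contra hcon
  exact hne (homogeneousComponent_eq_zero _ _ (by omega))

/-- monomials of exact degree k ≃ Sym -/
noncomputable def degEqEquiv (n k : ℕ) :
    {d : Fin n →₀ ℕ // (d.sum fun _ e => e) = k} ≃ Sym (Fin n) k where
  toFun d := ⟨Finsupp.toMultiset d.1, by
    rw [Finsupp.card_toMultiset]; exact d.2⟩
  invFun s := ⟨Multiset.toFinsupp s.1, by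
    have := Multiset.toFinsupp_sum_eq (s.1 : Multiset (Fin n))
    simp only [Function.id_def] at this
    rw [this]; exact s.2⟩
  left_inv d := by ext : 1; simp
  right_inv s := by ext : 1; simp

noncomputable def degLeEquiv (n N : ℕ) :
    {d : Fin n →₀ ℕ // (d.sum fun _ e => e) ≤ N}
      ≃ Σ k : Fin (N+1), {d : Fin n →₀ ℕ // (d.sum fun _ e => e) = k} where
  toFun d := ⟨⟨d.1.sum fun _ e => e, Nat.lt_succ_of_le d.2⟩, ⟨d.1, rfl⟩⟩
  invFun x := ⟨x.2.1, by rw [x.2.2]; exact Nat.lt_succ_iff.mp x.1.isLt⟩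
  left_inv d := rfl
  right_inv x := by
    obtain ⟨⟨k, hk⟩, ⟨d, hd⟩⟩ := x
    simp only [Fin.val_mk] at hd
    subst hd
    rfl

lemma nat_card_degEq (n k : ℕ) :
    Nat.card {d : Fin n →₀ ℕ // (d.sum fun _ e => e) = k} = Nat.multichoose n k := by
  rw [Nat.card_congr (degEqEquiv n k), Nat.card_eq_fintype_card,
    Sym.card_sym_eq_multichoose, Fintype.card_fin]

lemma nat_card_degLe (n N : ℕ) :
    Nat.card {d : Fin n →₀ ℕ // (d.sum fun _ e => e) ≤ N}
      = ∑ k ∈ Finset.range (N+1), Nat.multichoose n k := by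
  rw [Nat.card_congr (degLeEquiv n N)]
  haveI : ∀ k : Fin (N+1), Fintype {d : Fin n →₀ ℕ // (d.sum fun _ e => e) = (k:ℕ)} :=
    fun k => Fintype.ofEquiv _ (degEqEquiv n k).symm
  rw [Nat.card_eq_fintype_card, Fintype.card_sigma,
    ← Fin.sum_univ_eq_sum_range fun k => Nat.multichoose n k]
  apply Finset.sum_congr rfl
  intro k _
  rw [← nat_card_degEq n (k:ℕ), Nat.card_eq_fintype_card]

lemma sum_multichoose (n N : ℕ) :
    ∑ k ∈ Finset.range (N+1), Nat.multichoose n k = (n + N).choose N := by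
  induction N with
  | zero => simp [Nat.multichoose]
  | succ N ih =>
    rw [Finset.sum_range_succ, ih, Nat.multichoose_eq]
    have h1 : n + (N + 1) - 1 = n + N := by omega
    rw [h1]
    have h2 : n + (N+1) = (n + N) + 1 := by omega
    rw [h2, Nat.choose_succ_succ (n+N) N]

lemma finrank_restrictTotalDegree (n N : ℕ) :
    Module.finrank ℝ (MvPolynomial.restrictTotalDegree (Fin n) ℝ N) = (n + N).choose N := by
  rw [MvPolynomial.restrictTotalDegree,
    Module.finrank_eq_nat_card_basis (MvPolynomial.basisRestrictSupport ℝ _)]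
  rw [← sum_multichoose n N, ← nat_card_degLe n N]
  exact Nat.card_congr (Equiv.subtypeEquivRight fun d => Iff.rfl)

lemma sphPoly_ne_zero {n : ℕ} (hn : 1 ≤ n) (r : ℝ) : sphPoly n r ≠ 0 := by
  intro h
  have h2 : homogeneousComponent 2 (sphPoly n r)
      = (∑ i : Fin n, MvPolynomial.X i ^ 2 : MvPolynomial (Fin n) ℝ) := by
    rw [sphPoly, map_sub]
    rw [homogeneousComponent_of_mem ((mem_homogeneousSubmodule _ _).mpr (sqSum_isHomogeneous n)),
      if_pos rfl]
    rw [homogeneousComponent_of_mem ((mem_homogeneousSubmodule _ _).mpr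
      (isHomogeneous_C _ _)), if_neg (by omega), sub_zero]
  rw [h, map_zero] at h2
  exact sqSum_ne_zero hn h2.symm

lemma sphPoly_totalDegree_le {n : ℕ} (r : ℝ) : (sphPoly n r).totalDegree ≤ 2 := by
  rw [sphPoly, sub_eq_add_neg, ← map_neg MvPolynomial.C]
  refine (totalDegree_add _ _).trans ?_
  rw [totalDegree_C]
  refine max_le ((totalDegree_finset_sum _ _).trans ?_) (by omega)
  refine Finset.sup_le fun i _ => ?_
  rw [totalDegree_X_pow]

lemma totalDegree_prod_sph_le {n p : ℕ} (r : Fin p → ℝ) (P : Finset (Fin p)) :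
    (∏ i ∈ P, sphPoly n (r i)).totalDegree ≤ 2 * P.card := by
  refine (totalDegree_finset_prod _ _).trans ?_
  calc ∑ i ∈ P, (sphPoly n (r i)).totalDegree ≤ ∑ _i ∈ P, 2 :=
        Finset.sum_le_sum fun i _ => sphPoly_totalDegree_le _
    _ = 2 * P.card := by rw [Finset.sum_const, smul_eq_mul, mul_comm]

lemma totalDegree_prod_sph_mul {n p : ℕ} (hn : 1 ≤ n) (r : Fin p → ℝ) (P : Finset (Fin p))
    {q : MvPolynomial (Fin n) ℝ} (hq : q ≠ 0) :
    q.totalDegree + 2 * P.card ≤ ((∏ i ∈ P, sphPoly n (r i)) * q).totalDegree := by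
  classical
  induction P using Finset.induction_on with
  | empty => simp
  | @insert a P ha ih =>
    rw [Finset.prod_insert ha, mul_assoc]
    set q' := (∏ i ∈ P, sphPoly n (r i)) * q with hq'
    have hq'ne : q' ≠ 0 :=
      mul_ne_zero (Finset.prod_ne_zero_iff.mpr fun i _ => sphPoly_ne_zero hn _) hq
    have h1 := totalDegree_add_two_le hn (r a) hq'ne
    have h2 := ih
    rw [Finset.card_insert_of_notMem ha]
    omega

lemma eval_sphPoly {n : ℕ} (r : ℝ) (y : Fin n → ℝ) :
    MvPolynomial.eval y (sphPoly n r) = (∑ i, y i ^ 2) - r ^ 2 := by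
  simp [sphPoly]

lemma choose_mono_diag (n : ℕ) {a b : ℕ} (h : a ≤ b) :
    (n + a).choose a ≤ (n + b).choose b := by
  rw [← sum_multichoose, ← sum_multichoose]
  refine Finset.sum_le_sum_of_subset ?_
  intro x hx
  simp only [Finset.mem_range] at *
  omega

lemma choose_diag_succ (n M : ℕ) (hn : 1 ≤ n) :
    (n + (M + 1)).choose (M + 1) = (n + M).choose M + (n + M).choose (n - 1) := by
  have h1 : n + (M + 1) = (n + M) + 1 := by omega
  rw [h1, Nat.choose_succ_succ (n + M) M]
  congr 1
  have h2 : n + M - (M + 1) = n - 1 := by omega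
  rw [← h2, Nat.choose_symm (by omega)]

lemma choose_diag_diff (n e : ℕ) (hn : 1 ≤ n) :
    ∀ t, t ≤ e → (n + e).choose e - (n + (e - t)).choose (e - t)
      = ∑ i ∈ Finset.range t, (n + e - i - 1).choose (n - 1) := by
  intro t
  induction t with
  | zero => simp
  | succ t ih =>
    intro ht
    rw [Finset.sum_range_succ, ← ih (by omega)]
    have hstep : (n + (e - t)).choose (e - t)
        = (n + (e - (t+1))).choose (e - (t+1)) + (n + (e - (t+1))).choose (n - 1) := by
      have h3 : e - t = (e - (t+1)) + 1 := by omega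
      rw [h3, choose_diag_succ n (e - (t+1)) hn]
    have heq : n + e - t - 1 = n + (e - (t + 1)) := by omega
    rw [heq]
    have m1 := choose_mono_diag n (Nat.sub_le e t)
    have m2 := choose_mono_diag n (show e - (t+1) ≤ e - t by omega)
    omega

/-- evaluation at the origin as a linear map -/
noncomputable def ev0 (n : ℕ) : MvPolynomial (Fin n) ℝ →ₗ[ℝ] ℝ where
  toFun f := MvPolynomial.eval (fun _ => (0:ℝ)) f
  map_add' p q := by simp
  map_smul' c p := by simp [MvPolynomial.smul_eval]

lemma norm_eq_iff_sum_sq {n : ℕ} (x : Euc n) {c : ℝ} (hc : 0 ≤ c) :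
    ‖x‖ = c ↔ ∑ j, x j ^ 2 = c ^ 2 := by
  have h1 : ‖x‖ ^ 2 = ∑ j, x j ^ 2 := by
    rw [EuclideanSpace.norm_eq, Real.sq_sqrt (by positivity)]
    exact Finset.sum_congr rfl fun j _ => by rw [Real.norm_eq_abs, sq_abs]
  constructor
  · intro h; rw [← h1, h]
  · intro h
    have h2 : ‖x‖ ^ 2 = c ^ 2 := by rw [h1, h]
    nlinarith [norm_nonneg x]

end Aux


set_option maxHeartbeats 2000000 in
set_option synthInstance.maxHeartbeats 400000 in
/-- Let `S` be the union of `p` concentric spheres in `ℝⁿ` centered at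
the origin with distinct radii `r₁, …, r_p ≥ 0`, and `ε_S = 1` iff `0 ∈ S`.
(a) If `p ≤ ⌊(e + ε_S)/2⌋`, then
`dim Pol_e(S) = ε_S + ∑_{i=0}^{2(p-ε_S)-1} C(n+e-i-1, n-1) < C(n+e, e)`.
(b) If `p ≥ ⌊(e + ε_S)/2⌋ + 1`, then `dim Pol_e(S) = C(n+e, e)`. -/
theorem dim_polOn_concentric_spheres (n : ℕ) (hn : 1 ≤ n) (e p : ℕ)
    (r : Fin p → ℝ) (hr0 : ∀ i, 0 ≤ r i) (hrinj : Function.Injective r)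
    (S : Set (Euc n)) (hS : S = ⋃ i, Metric.sphere (0 : Euc n) (r i))
    (ε : ℕ) (hε : ε = if (0 : Euc n) ∈ S then 1 else 0) :
    (p ≤ (e + ε) / 2 →
      dimPolOn n e S
          = ε + ∑ i ∈ Finset.range (2 * (p - ε)), (n + e - i - 1).choose (n - 1) ∧
        dimPolOn n e S < (n + e).choose e) ∧
    ((e + ε) / 2 + 1 ≤ p → dimPolOn n e S = (n + e).choose e) := by
  subst hS
  set S := ⋃ i, Metric.sphere (0 : Euc n) (r i) with hS
  -- membership
  have hmem : ∀ x : Euc n, x ∈ S ↔ ∃ i, ∑ j, x j ^ 2 = r i ^ 2 := by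
    intro x
    rw [hS, Set.mem_iUnion]
    exact exists_congr fun i => by
      rw [mem_sphere_zero_iff_norm, norm_eq_iff_sum_sq x (hr0 i)]
  have hzapp : ∀ j, (0 : Euc n) j = 0 := fun j => rfl
  have hzsum : ∑ j, (0 : Euc n) j ^ 2 = 0 :=
    Finset.sum_eq_zero fun j _ => by rw [hzapp]; norm_num
  have h0S : ((0 : Euc n) ∈ S) ↔ ∃ i, r i = 0 := by
    rw [hmem]
    refine exists_congr fun i => ?_
    rw [hzsum]
    constructor
    · intro h
      have h2 := hr0 i
      nlinarith
    · intro h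
      rw [h]
      norm_num
  have hεval : ε = if (∃ i, r i = 0) then 1 else 0 := by
    rw [hε]
    by_cases h : ∃ i, r i = 0
    · rw [if_pos (h0S.mpr h), if_pos h]
    · rw [if_neg (fun hc => h (h0S.mp hc)), if_neg h]
  set P : Finset (Fin p) := Finset.univ.filter (fun i => r i ≠ 0) with hP
  set k := P.card with hk
  have hkp : k + ε = p := by
    have hsplit := Finset.card_filter_add_card_filter_not
      (s := (Finset.univ : Finset (Fin p))) (p := fun i => r i ≠ 0)
    rw [Finset.card_univ, Fintype.card_fin, ← hP] at hsplit
    by_cases h : ∃ i, r i = 0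
    · obtain ⟨i0, hi0⟩ := h
      have hone : (Finset.univ.filter (fun i => ¬ r i ≠ 0)) = {i0} := by
        ext j
        simp only [Finset.mem_filter, Finset.mem_univ, true_and, Finset.mem_singleton,
          not_not]
        constructor
        · intro hj; exact hrinj (by rw [hj, hi0])
        · intro hj; rw [hj, hi0]
      have hε1 : ε = 1 := by rw [hεval]; exact if_pos ⟨i0, hi0⟩
      rw [hone, Finset.card_singleton] at hsplit
      omega
    · push_neg at h
      have hzero : (Finset.univ.filter (fun i => ¬ r i ≠ 0)) = ∅ := by
        ext j; simp [h j]
      have hε0 : ε = 0 := by rw [hεval]; exact if_neg (by push_neg; exact h)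
      rw [hzero, Finset.card_empty] at hsplit
      omega
  set G : MvPolynomial (Fin n) ℝ := ∏ i ∈ P, sphPoly n (r i) with hG
  have hGne : G ≠ 0 :=
    Finset.prod_ne_zero_iff.mpr fun i _ => sphPoly_ne_zero hn _
  have hG0 : MvPolynomial.eval (fun _ => (0:ℝ)) G ≠ 0 := by
    rw [hG, map_prod]
    refine Finset.prod_ne_zero_iff.mpr fun i hi => ?_
    rw [eval_sphPoly]
    have hri : r i ≠ 0 := (Finset.mem_filter.mp hi).2
    have h2 : ∑ j : Fin n, (0:ℝ) ^ 2 = 0 := Finset.sum_eq_zero fun j _ => by norm_num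
    rw [h2]
    intro hc
    have h3 : r i ^ 2 = 0 := by linarith
    exact hri (pow_eq_zero_iff (by norm_num) |>.mp h3)
  -- kernel characterization
  have hvanish : ∀ f : MvPolynomial (Fin n) ℝ,
      (∀ x : Euc n, x ∈ S → MvPolynomial.eval (fun i => x i) f = 0) ↔
      ∃ q, f = G * q ∧ ((∃ i, r i = 0) → MvPolynomial.eval (fun _ => (0:ℝ)) q = 0) := by
    intro f
    constructor
    · intro hf
      have hdvd : G ∣ f := by
        rw [hG]
        refine Finset.prod_dvd_of_coprime ?_ ?_
        · intro i hi j hj hij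
          simp only [Function.onFun]
          have hrnei : r i ≠ 0 := by
            simp only [hP, Finset.coe_filter, Set.mem_setOf_eq] at hi; exact hi.2
          have hrnej : r j ≠ 0 := by
            simp only [hP, Finset.coe_filter, Set.mem_setOf_eq] at hj; exact hj.2
          have hne : r i ≠ r j := fun hc => hij (hrinj hc)
          have hd : r j ^ 2 - r i ^ 2 ≠ 0 := by
            have h1 := hr0 i; have h2 := hr0 j
            rcases lt_trichotomy (r i) (r j) with h | h | h
            · nlinarith
            · exact absurd h hne
            · nlinarith
          refine ⟨MvPolynomial.C (r j ^ 2 - r i ^ 2)⁻¹,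
            -MvPolynomial.C (r j ^ 2 - r i ^ 2)⁻¹, ?_⟩
          have hsub : sphPoly n (r i) - sphPoly n (r j)
              = MvPolynomial.C (r j ^ 2 - r i ^ 2) := by
            rw [sphPoly, sphPoly, map_sub]
            ring
          calc MvPolynomial.C (r j ^ 2 - r i ^ 2)⁻¹ * sphPoly n (r i)
                + -MvPolynomial.C (r j ^ 2 - r i ^ 2)⁻¹ * sphPoly n (r j)
              = MvPolynomial.C (r j ^ 2 - r i ^ 2)⁻¹
                * (sphPoly n (r i) - sphPoly n (r j)) := by ring
            _ = MvPolynomial.C (r j ^ 2 - r i ^ 2)⁻¹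
                * MvPolynomial.C (r j ^ 2 - r i ^ 2) := by rw [hsub]
            _ = 1 := by rw [← MvPolynomial.C_mul, inv_mul_cancel₀ hd, MvPolynomial.C_1]
        · intro i hi
          have hrnei : r i ≠ 0 := (Finset.mem_filter.mp hi).2
          have hrpos : 0 < r i := lt_of_le_of_ne (hr0 i) (Ne.symm hrnei)
          refine dvd_of_vanish_sphere hn (r i) hrpos f fun y hy => ?_
          set x : Euc n := (WithLp.equiv 2 (Fin n → ℝ)).symm y with hx
          have hxy : (fun j => x j) = y := rfl
          have hxS : x ∈ S := (hmem x).mpr ⟨i, hy⟩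
          have := hf x hxS
          rwa [hxy] at this
      obtain ⟨q, hq⟩ := hdvd
      refine ⟨q, hq, fun hzero => ?_⟩
      have h0 : (0 : Euc n) ∈ S := h0S.mpr hzero
      have := hf 0 h0
      have hcoe : (fun i => (0 : Euc n) i) = fun _ => (0:ℝ) := by
        funext i; rfl
      rw [hcoe, hq, map_mul] at this
      exact (mul_eq_zero.mp this).resolve_left hG0
    · rintro ⟨q, rfl, hq0⟩
      intro x hxS
      obtain ⟨i, hi⟩ := (hmem x).mp hxS
      by_cases hri : r i = 0
      · have hx0 : (fun j => x j) = fun _ => (0:ℝ) := by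
          funext j
          have hsum : ∑ j, x j ^ 2 = 0 := by rw [hi, hri]; norm_num
          have := (Finset.sum_eq_zero_iff_of_nonneg
            (fun j _ => by positivity)).mp hsum j (Finset.mem_univ j)
          exact pow_eq_zero_iff (by norm_num) |>.mp this
        rw [hx0, map_mul, hq0 ⟨i, hri⟩, mul_zero]
      · have hiP : i ∈ P := Finset.mem_filter.mpr ⟨Finset.mem_univ i, hri⟩
        rw [map_mul, hG, map_prod]
        have hzero : MvPolynomial.eval (fun j => x j) (sphPoly n (r i)) = 0 := by
          rw [eval_sphPoly, hi]; ring
        rw [Finset.prod_eq_zero hiP hzero, zero_mul]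
  -- linear algebra setup
  set W := MvPolynomial.restrictTotalDegree (Fin n) ℝ e with hW
  set φ : W →ₗ[ℝ] (S → ℝ) := (polyRestrict n S).comp W.subtype with hφ
  have hrange : PolOn n e S = LinearMap.range φ := by
    rw [PolOn, hφ, LinearMap.range_comp, Submodule.range_subtype]
  have hdim : dimPolOn n e S + Module.finrank ℝ (LinearMap.ker φ) = (n + e).choose e := by
    have h1 : dimPolOn n e S = Module.finrank ℝ (LinearMap.range φ) := by
      rw [dimPolOn, hrange]
    rw [h1, LinearMap.finrank_range_add_finrank_ker φ, hW, finrank_restrictTotalDegree]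
  have hkermem : ∀ v : W, v ∈ LinearMap.ker φ ↔
      ∃ q, (v : MvPolynomial (Fin n) ℝ) = G * q ∧
        ((∃ i, r i = 0) → MvPolynomial.eval (fun _ => (0:ℝ)) q = 0) := by
    intro v
    rw [LinearMap.mem_ker, ← hvanish]
    constructor
    · intro h x hx
      have := congrFun h ⟨x, hx⟩
      simpa [hφ, polyRestrict, evalPt] using this
    · intro h
      funext x
      simpa [hφ, polyRestrict, evalPt] using h x x.2
  constructor
  -- ============ case (a) ============
  · intro hcase
    have h2p : 2 * p ≤ e + ε := by
      have := (Nat.le_div_iff_mul_le (by norm_num)).mp hcase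
      omega
    have hεle : ε ≤ 1 := by rw [hεval]; split <;> omega
    have hεp : ε ≤ p := by omega
    have h2k : 2 * k + ε ≤ e := by omega
    set m' := e - 2 * k with hm'
    have hm'k : m' + 2 * k = e := by omega
    -- the kernel has dimension choose (n+m') m' - ε
    have hGdegle : G.totalDegree ≤ 2 * k := by rw [hG]; exact totalDegree_prod_sph_le r P
    have hWmem : ∀ q : MvPolynomial (Fin n) ℝ, q.totalDegree ≤ m' → G * q ∈ W := by
      intro q hq
      rw [hW, MvPolynomial.mem_restrictTotalDegree]
      calc (G * q).totalDegree ≤ G.totalDegree + q.totalDegree :=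
            MvPolynomial.totalDegree_mul _ _
        _ ≤ e := by omega
    have hqdeg : ∀ (v : W), v ∈ LinearMap.ker φ →
        ∀ q : MvPolynomial (Fin n) ℝ, (v : MvPolynomial (Fin n) ℝ) = G * q →
          q.totalDegree ≤ m' := by
      intro v hv q hvq
      by_cases hq : q = 0
      · rw [hq, MvPolynomial.totalDegree_zero]; omega
      · have hlow := totalDegree_prod_sph_mul hn r P hq
        rw [← hG, ← hvq] at hlow
        have hdegv : (v : MvPolynomial (Fin n) ℝ).totalDegree ≤ e :=
          (MvPolynomial.mem_restrictTotalDegree _ _ _).mp v.2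
        omega
    set V' := MvPolynomial.restrictTotalDegree (Fin n) ℝ m' with hV'
    have hkerdim : Module.finrank ℝ (LinearMap.ker φ) + ε = (n + m').choose m' := by
      by_cases hzero : ∃ i, r i = 0
      · -- ε = 1
        have hε1 : ε = 1 := by rw [hεval]; exact if_pos hzero
        set L : V' →ₗ[ℝ] ℝ := (ev0 n).comp V'.subtype with hL
        have hLsurj : Function.Surjective L := by
          intro c
          refine ⟨⟨MvPolynomial.C c, ?_⟩, ?_⟩
          · rw [hV', MvPolynomial.mem_restrictTotalDegree, MvPolynomial.totalDegree_C]
            omega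
          · simp [hL, ev0]
        have hrankL := LinearMap.finrank_range_add_finrank_ker L
        rw [LinearMap.range_eq_top.mpr hLsurj, finrank_top, Module.finrank_self] at hrankL
        have hkmem : ∀ q : ↥(LinearMap.ker L),
            (⟨G * q.1.1, hWmem _ ((MvPolynomial.mem_restrictTotalDegree _ _ _).mp q.1.2)⟩ : W)
              ∈ LinearMap.ker φ := by
          intro q
          rw [hkermem]
          refine ⟨q.1.1, rfl, fun _ => ?_⟩
          have := q.2
          simpa [hL, ev0] using this
        set Ψ : ↥(LinearMap.ker L) →ₗ[ℝ] ↥(LinearMap.ker φ) :=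
          { toFun := fun q =>
              ⟨⟨G * q.1.1, hWmem _ ((MvPolynomial.mem_restrictTotalDegree _ _ _).mp q.1.2)⟩,
                hkmem q⟩,
            map_add' := by
              intro a b
              apply Subtype.ext; apply Subtype.ext
              simp [mul_add]
            map_smul' := by
              intro c a
              apply Subtype.ext; apply Subtype.ext
              simp [mul_smul_comm] } with hΨ
        have hbij : Function.Bijective Ψ := by
          constructor
          · intro a b hab
            have h1 : G * a.1.1 = G * b.1.1 := congrArg (fun z => z.1.1) hab
            have h2 : a.1.1 = b.1.1 := mul_left_cancel₀ hGne h1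
            exact Subtype.ext (Subtype.ext h2)
          · rintro ⟨v, hv⟩
            obtain ⟨q, hvq, hq0⟩ := (hkermem v).mp hv
            have hdq : q.totalDegree ≤ m' := hqdeg v hv q hvq
            have hqV' : q ∈ V' := by
              rw [hV', MvPolynomial.mem_restrictTotalDegree]; exact hdq
            have hqL : (⟨q, hqV'⟩ : V') ∈ LinearMap.ker L := by
              rw [LinearMap.mem_ker]
              simp only [hL, LinearMap.comp_apply, Submodule.coe_subtype]
              show ev0 n q = 0
              simpa [ev0] using hq0 hzero
            exact ⟨⟨⟨q, hqV'⟩, hqL⟩, Subtype.ext (Subtype.ext hvq.symm)⟩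
        have heq : Module.finrank ℝ ↥(LinearMap.ker L)
            = Module.finrank ℝ ↥(LinearMap.ker φ) :=
          (LinearEquiv.ofBijective Ψ hbij).finrank_eq
        have hV'rank : Module.finrank ℝ V' = (n + m').choose m' := by
          rw [hV', finrank_restrictTotalDegree]
        omega
      · -- ε = 0
        have hε0 : ε = 0 := by rw [hεval]; exact if_neg hzero
        have hkmem : ∀ q : ↥V',
            (⟨G * q.1, hWmem _ ((MvPolynomial.mem_restrictTotalDegree _ _ _).mp q.2)⟩ : W)
              ∈ LinearMap.ker φ := by
          intro q
          rw [hkermem]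
          exact ⟨q.1, rfl, fun h => absurd h hzero⟩
        set Ψ : ↥V' →ₗ[ℝ] ↥(LinearMap.ker φ) :=
          { toFun := fun q =>
              ⟨⟨G * q.1, hWmem _ ((MvPolynomial.mem_restrictTotalDegree _ _ _).mp q.2)⟩,
                hkmem q⟩,
            map_add' := by
              intro a b
              apply Subtype.ext; apply Subtype.ext
              simp [mul_add]
            map_smul' := by
              intro c a
              apply Subtype.ext; apply Subtype.ext
              simp [mul_smul_comm] } with hΨ
        have hbij : Function.Bijective Ψ := by
          constructor
          · intro a b hab
            have h1 : G * a.1 = G * b.1 := congrArg (fun z => z.1.1) hab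
            exact Subtype.ext (mul_left_cancel₀ hGne h1)
          · rintro ⟨v, hv⟩
            obtain ⟨q, hvq, hq0⟩ := (hkermem v).mp hv
            have hdq : q.totalDegree ≤ m' := hqdeg v hv q hvq
            have hqV' : q ∈ V' := by
              rw [hV', MvPolynomial.mem_restrictTotalDegree]; exact hdq
            exact ⟨⟨q, hqV'⟩, Subtype.ext (Subtype.ext hvq.symm)⟩
        have heq : Module.finrank ℝ ↥V' = Module.finrank ℝ ↥(LinearMap.ker φ) :=
          (LinearEquiv.ofBijective Ψ hbij).finrank_eq
        have hV'rank : Module.finrank ℝ V' = (n + m').choose m' := by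
          rw [hV', finrank_restrictTotalDegree]
        omega
    have hmono := choose_mono_diag n (show m' ≤ e by omega)
    have hformula := choose_diag_diff n e hn (2 * k) (by omega)
    have hem : e - 2 * k = m' := rfl
    have hpε : 2 * (p - ε) = 2 * k := by omega
    have hchoosepos : 1 ≤ (n + m').choose m' := Nat.choose_pos (by omega)
    have hbig : ε = 1 → 2 ≤ (n + m').choose m' := by
      intro hε1
      have hm1 : 1 ≤ m' := by omega
      calc 2 ≤ m' + 1 := by omega
        _ = (1 + m').choose m' := by rw [add_comm 1 m', Nat.choose_succ_self_right]
        _ ≤ (n + m').choose m' := Nat.choose_le_choose m' (by omega)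
    constructor
    · rw [hpε, ← hformula, hem]
      omega
    · have : 1 ≤ (n + m').choose m' - ε := by
        rcases Nat.le_one_iff_eq_zero_or_eq_one.mp hεle with h | h
        · omega
        · have := hbig h; omega
      omega
  -- ============ case (b) ============
  · intro hcase
    have h2p : e + ε + 1 ≤ 2 * p := by
      have : (e + ε) / 2 < p := by omega
      have := (Nat.div_lt_iff_lt_mul (by norm_num : 0 < 2)).mp this
      omega
    have hεle : ε ≤ 1 := by rw [hεval]; split <;> omega
    have hkerbot : LinearMap.ker φ = ⊥ := by
      rw [Submodule.eq_bot_iff]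
      intro v hv
      obtain ⟨q, hvq, hq0⟩ := (hkermem v).mp hv
      have hdegv : (v : MvPolynomial (Fin n) ℝ).totalDegree ≤ e :=
        (MvPolynomial.mem_restrictTotalDegree _ _ _).mp v.2
      by_cases hq : q = 0
      · have : (v : MvPolynomial (Fin n) ℝ) = 0 := by rw [hvq, hq, mul_zero]
        exact Subtype.ext this
      · exfalso
        have hlow := totalDegree_prod_sph_mul hn r P hq
        rw [← hG, ← hvq] at hlow
        by_cases hzero : ∃ i, r i = 0
        · -- ε = 1, k = p - 1
          have hε1 : ε = 1 := by rw [hεval, if_pos hzero]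
          have hkp1 : k = p - 1 := by omega
          have hdq : q.totalDegree = 0 := by omega
          have ha : q = MvPolynomial.C (MvPolynomial.coeff 0 q) := by
            conv_lhs => rw [← MvPolynomial.sum_homogeneousComponent q, hdq]
            rw [Finset.sum_range_one, MvPolynomial.homogeneousComponent_zero]
          have hev := hq0 hzero
          rw [ha] at hev
          simp at hev
          exact hq (by rw [ha, hev, map_zero])
        · have hε0 : ε = 0 := by rw [hεval, if_neg hzero]
          omega
    have hzero : Module.finrank ℝ (LinearMap.ker φ) = 0 := by
      rw [hkerbot]
      exact finrank_bot ℝ _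
    omega

end
end
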